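/- arXiv:0710.2307 — 14 statements merged into one kernel-verified Lean document; each statement's English description precedes it below -/
import Mathlib

section
/- For all real numbers u, v ≥ 0 and 1 < p ≤ 2 with q = p/(p-1), one has (1/q)(u^{p/2} - v^{q/2})² ≤ u^p/p + v^q/q - uv. -/
theorem stmt_0 (u v p q : ℝ) (hu : 0 ≤ u) (hv : 0 ≤ v)
    (hp1 : 1 < p) (hp2 : p ≤ 2) (hq : q = p / (p - 1)) :
    (1 / q) * (u ^ (p / 2) - v ^ (q / 2)) ^ 2 ≤ u ^ p / p + v ^ q / q - u * v := by
  have hp0 : (0:ℝ) < p := by linarith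
  have hp1' : (0:ℝ) < p - 1 := by linarith
  have hq0 : (0:ℝ) < q := by rw [hq]; positivity
  have hq2 : (2:ℝ) ≤ q := by
    rw [hq, le_div_iff₀ hp1']; nlinarith
  have hpq : 1/p + 1/q = 1 := by rw [hq]; field_simp; ring
  set a := u ^ (p/2) with ha
  set b := v ^ (q/2) with hb
  have ha0 : 0 ≤ a := Real.rpow_nonneg hu _
  have hb0 : 0 ≤ b := Real.rpow_nonneg hv _
  have hua : u ^ p = a ^ 2 := by
    rw [ha, ← Real.rpow_natCast (u ^ (p/2)) 2, ← Real.rpow_mul hu]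
    norm_num
  have hvb : v ^ q = b ^ 2 := by
    rw [hb, ← Real.rpow_natCast (v ^ (q/2)) 2, ← Real.rpow_mul hv]
    norm_num
  have key : u * v ≤ (1 - 2/q) * a^2 + (2/q) * (a*b) := by
    rcases eq_or_lt_of_le hu with h | hu'
    · have hu0 : u = 0 := h.symm
      have ha' : a = 0 := by
        rw [ha, hu0, Real.zero_rpow (by positivity)]
      rw [hu0, ha']; ring_nf; positivity
    rcases eq_or_lt_of_le hv with h | hv'
    · have hv0 : v = 0 := h.symm
      have hb' : b = 0 := by
        rw [hb, hv0, Real.zero_rpow (by positivity)]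
      rw [hv0, hb']
      have h1 : 2/q ≤ 1 := by
        rw [div_le_one hq0]; linarith
      nlinarith [sq_nonneg a]
    have ha' : 0 < a := Real.rpow_pos_of_pos hu' _
    have hb' : 0 < b := Real.rpow_pos_of_pos hv' _
    have hua2 : u = a ^ (2/p) := by
      rw [ha, ← Real.rpow_mul hu]
      rw [show p/2 * (2/p) = 1 by field_simp]
      exact (Real.rpow_one u).symm
    have hvb2 : v = b ^ (2/q) := by
      rw [hb, ← Real.rpow_mul hv]
      rw [show q/2 * (2/q) = 1 by field_simp]
      exact (Real.rpow_one v).symm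
    have h1p : 1/p = 1 - 1/q := by linarith
    have hexp : 2/p = 1 + (1 - 2/q) := by
      rw [show (2:ℝ)/p = 2*(1/p) by ring, h1p]; ring
    have hsplit : a ^ (2/p) = a * a ^ (1 - 2/q) := by
      rw [hexp, Real.rpow_add ha', Real.rpow_one]
    have hw1 : (0:ℝ) ≤ 1 - 2/q := by
      rw [sub_nonneg, div_le_one hq0]; linarith
    have hw2 : (0:ℝ) ≤ 2/q := by positivity
    have hsum : (1 - 2/q) + 2/q = 1 := by ring
    have amgm := Real.geom_mean_le_arith_mean2_weighted hw1 hw2 ha0 hb0 hsum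
    calc u * v = a * (a ^ (1 - 2/q) * b ^ (2/q)) := by
          rw [hua2, hvb2, hsplit]; ring
      _ ≤ a * ((1 - 2/q) * a + (2/q) * b) := by
          exact mul_le_mul_of_nonneg_left amgm ha0
      _ = (1 - 2/q) * a^2 + (2/q) * (a*b) := by ring
  rw [hua, hvb]
  have hid : (1/q) * (a - b)^2 = a^2/p + b^2/q - ((1 - 2/q) * a^2 + (2/q) * (a*b)) := by
    linear_combination (-a^2) * hpq
  linarith [key, hid.le, hid.ge]
end

section
/- For all real numbers u, v ≥ 0 and 1 < p ≤ 2 with q = p/(p-1), one has u^p/p + v^q/q - uv ≤ (1/p)(u^{p/2} - v^{q/2})². -/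
theorem stmt_1 (u v p q : ℝ) (hu : 0 ≤ u) (hv : 0 ≤ v)
    (hp1 : 1 < p) (hp2 : p ≤ 2) (hq : q = p / (p - 1)) :
    u ^ p / p + v ^ q / q - u * v ≤ (1 / p) * (u ^ (p / 2) - v ^ (q / 2)) ^ 2 := by
  have hp0 : (0:ℝ) < p := by linarith
  have hp1' : (0:ℝ) < p - 1 := by linarith
  have hq0 : 0 < q := by rw [hq]; positivity
  have hpq : 1/p + 1/q = 1 := by rw [hq]; field_simp; ring
  set x := u ^ (p/2) with hxdef
  set y := v ^ (q/2) with hydef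
  have hx : 0 ≤ x := Real.rpow_nonneg hu _
  have hy : 0 ≤ y := Real.rpow_nonneg hv _
  have hup : u ^ p = x ^ 2 := by
    rw [hxdef, ← Real.rpow_natCast (u ^ (p/2)) 2, ← Real.rpow_mul hu]
    norm_num
  have hvq : v ^ q = y ^ 2 := by
    rw [hydef, ← Real.rpow_natCast (v ^ (q/2)) 2, ← Real.rpow_mul hv]
    norm_num
  have huv : u * v = x ^ (2/p) * y ^ (2/q) := by
    rw [hxdef, hydef, ← Real.rpow_mul hu, ← Real.rpow_mul hv,
      show p/2*(2/p) = 1 by field_simp, show q/2*(2/q) = 1 by field_simp,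
      Real.rpow_one, Real.rpow_one]
  rw [hup, hvq, huv]
  rcases eq_or_lt_of_le hy with hy0 | hy0
  · rw [← hy0, Real.zero_rpow (by positivity : (2/q : ℝ) ≠ 0)]
    rw [show (0:ℝ)^2 = 0 by ring]
    rw [div_eq_mul_inv, div_eq_mul_inv]
    ring_nf
    nlinarith [sq_nonneg x]
  · -- y > 0
    have ht1 : 1 ≤ 2/p := by rw [le_div_iff₀ hp0]; linarith
    have hs : (-1:ℝ) ≤ x/y - 1 := by
      have : 0 ≤ x/y := div_nonneg hx hy0.le
      linarith
    have bern := one_add_mul_self_le_rpow_one_add hs ht1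
    rw [add_sub_cancel] at bern
    -- bern : 1 + 2/p * (x/y - 1) ≤ (x/y) ^ (2/p)
    have hkey : y^2 + (2/p) * (x*y - y^2) ≤ x ^ (2/p) * y ^ (2/q) := by
      have h2q : (2:ℝ)/q = 2 - 2/p := by
        rw [hq]; field_simp
      have hrw : x ^ (2/p) * y ^ (2/q) = (x/y)^(2/p) * y^2 := by
        rw [Real.div_rpow hx hy0.le, h2q, Real.rpow_sub hy0,
          ← Real.rpow_natCast y 2]
        push_cast
        field_simp
      rw [hrw]
      have := mul_le_mul_of_nonneg_right bern (sq_nonneg y)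
      calc y^2 + (2/p) * (x*y - y^2)
          = (1 + 2/p * (x/y - 1)) * y^2 := by field_simp
        _ ≤ (x/y)^(2/p) * y^2 := this
    have hkey' : p*y^2 + 2*(x*y - y^2) ≤ p * (x ^ (2/p) * y ^ (2/q)) := by
      have h := mul_le_mul_of_nonneg_left hkey hp0.le
      have e : p*(y^2 + (2/p) * (x*y - y^2)) = p*y^2 + 2*(x*y - y^2) := by
        field_simp
      linarith [e ▸ h]
    have hmain : x^2 + (p-1)*y^2 - p * (x^(2/p)*y^(2/q)) ≤ (x-y)^2 := by
      nlinarith [hkey']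
    have egoal : x^2/p + y^2/q - x^(2/p)*y^(2/q)
        = (1/p)*(x^2 + (p-1)*y^2 - p*(x^(2/p)*y^(2/q))) := by
      rw [hq]; field_simp
    rw [egoal]
    exact mul_le_mul_of_nonneg_left hmain (by positivity)
end

section
/- Let (X, μ) be a measure space, 1 < p ≤ 2, q = p/(p-1), f ∈ L^p and g ∈ L^q with ‖f‖_p > 0 and ‖g‖_q > 0. Then ‖fg‖_1 ≤ ‖f‖_p‖g‖_q·(1 - (1/q)·‖|f|^{p/2}/‖f‖_p^{p/2} - |g|^{q/2}/‖g‖_q^{q/2}‖_2²). -/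
open MeasureTheory

lemma young_refined {p q : ℝ} (hp1 : 1 < p) (hp2 : p ≤ 2) (hq : q = p / (p - 1))
    {a b : ℝ} (ha : 0 ≤ a) (hb : 0 ≤ b) :
    a * b ≤ a ^ p / p + b ^ q / q - (1 / q) * (a ^ (p / 2) - b ^ (q / 2)) ^ 2 := by
  have hp0 : 0 < p := by linarith
  have hps : 0 < p - 1 := by linarith
  have hq2 : 2 ≤ q := by rw [hq, le_div_iff₀ hps]; linarith
  have hq0 : 0 < q := by linarith
  have hqp : q * (p - 1) = p := by rw [hq]; field_simp
  have hpq : 1 / p + 1 / q = 1 := by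
    field_simp [hp0.ne', hq0.ne']
    linear_combination -hqp
  set u := a ^ (p / 2) with hu_def
  set v := b ^ (q / 2) with hv_def
  have hu : 0 ≤ u := Real.rpow_nonneg ha _
  have hv : 0 ≤ v := Real.rpow_nonneg hb _
  have hap : a ^ p = u ^ 2 := by
    rw [hu_def, ← Real.rpow_natCast (a ^ (p / 2)) 2, ← Real.rpow_mul ha]
    norm_num
  have hbq : b ^ q = v ^ 2 := by
    rw [hv_def, ← Real.rpow_natCast (b ^ (q / 2)) 2, ← Real.rpow_mul hb]
    norm_num
  have hw : 0 ≤ 1 - 2 / q := by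
    have : 2 / q ≤ 1 := by rw [div_le_one hq0]; linarith
    linarith
  have hsum : p * (1 - 2 / q) + p / q = 1 := by
    field_simp [hq0.ne']
    linear_combination hqp
  have e1 : ((u ^ 2 : ℝ)) ^ (1 - 2 / q) = a ^ (p * (1 - 2 / q)) := by
    rw [← hap, ← Real.rpow_mul ha]
  have e2 : (u * v) ^ (2 / q) = a ^ (p / q) * b := by
    rw [hu_def, hv_def,
      Real.mul_rpow (Real.rpow_nonneg ha _) (Real.rpow_nonneg hb _),
      ← Real.rpow_mul ha, ← Real.rpow_mul hb,
      show q / 2 * (2 / q) = 1 by field_simp, Real.rpow_one,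
      show p / 2 * (2 / q) = p / q by ring]
  have hab : a * b = ((u ^ 2 : ℝ)) ^ (1 - 2 / q) * (u * v) ^ (2 / q) := by
    rw [e1, e2, ← mul_assoc, ← Real.rpow_add' ha (by rw [hsum]; exact one_ne_zero), hsum,
      Real.rpow_one]
  have hkey : a * b ≤ (1 - 2 / q) * u ^ 2 + (2 / q) * (u * v) := by
    rw [hab]
    exact Real.geom_mean_le_arith_mean2_weighted (w₁ := 1 - 2 / q) (w₂ := 2 / q)
      (p₁ := u ^ 2) (p₂ := u * v) hw (by positivity) (sq_nonneg u) (mul_nonneg hu hv)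
      (by ring)
  rw [hap, hbq]
  have heq : u ^ 2 / p + v ^ 2 / q - 1 / q * (u - v) ^ 2
      = (1 - 2 / q) * u ^ 2 + (2 / q) * (u * v) := by
    linear_combination (u ^ 2) * hpq
  rw [heq]
  exact hkey

theorem stmt_4 {X : Type*} [MeasurableSpace X] (μ : Measure X)
    (p q : ℝ) (hp1 : 1 < p) (hp2 : p ≤ 2) (hq : q = p / (p - 1))
    (f g : X → ℝ)
    (hf : MemLp f (ENNReal.ofReal p) μ) (hg : MemLp g (ENNReal.ofReal q) μ)
    (hf0 : 0 < (eLpNorm f (ENNReal.ofReal p) μ).toReal)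
    (hg0 : 0 < (eLpNorm g (ENNReal.ofReal q) μ).toReal) :
    (eLpNorm (fun x => f x * g x) 1 μ).toReal ≤
      (eLpNorm f (ENNReal.ofReal p) μ).toReal * (eLpNorm g (ENNReal.ofReal q) μ).toReal *
        (1 - (1 / q) *
          (eLpNorm (fun x =>
              |f x| ^ (p / 2) / (eLpNorm f (ENNReal.ofReal p) μ).toReal ^ (p / 2) -
              |g x| ^ (q / 2) / (eLpNorm g (ENNReal.ofReal q) μ).toReal ^ (q / 2)) 2 μ).toReal ^ 2) := by
  have hp0 : 0 < p := by linarith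
  have hps : 0 < p - 1 := by linarith
  have hq2 : 2 ≤ q := by rw [hq, le_div_iff₀ hps]; linarith
  have hq0 : 0 < q := by linarith
  set A := (eLpNorm f (ENNReal.ofReal p) μ).toReal with hA_def
  set B := (eLpNorm g (ENNReal.ofReal q) μ).toReal with hB_def
  have hA0 : 0 < A := hf0
  have hB0 : 0 < B := hg0
  have hpne : ENNReal.ofReal p ≠ 0 := by simp [ENNReal.ofReal_eq_zero]; linarith
  have hqne : ENNReal.ofReal q ≠ 0 := by simp [ENNReal.ofReal_eq_zero]; linarith
  -- integrability of |f|^p and |g|^q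
  have hfp_int : Integrable (fun x => |f x| ^ p) μ := by
    have := hf.integrable_norm_rpow hpne ENNReal.ofReal_ne_top
    simpa [Real.norm_eq_abs, ENNReal.toReal_ofReal hp0.le] using this
  have hgq_int : Integrable (fun x => |g x| ^ q) μ := by
    have := hg.integrable_norm_rpow hqne ENNReal.ofReal_ne_top
    simpa [Real.norm_eq_abs, ENNReal.toReal_ofReal hq0.le] using this
  -- ∫ |f|^p = A^p
  have hIfp : ∫ x, |f x| ^ p ∂μ = A ^ p := by
    have h1 : eLpNorm (fun x => |f x| ^ p) 1 μ = eLpNorm f (ENNReal.ofReal p) μ ^ p := by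
      have h := eLpNorm_norm_rpow (p := 1) (μ := μ) f hp0
      simpa [Real.norm_eq_abs, one_mul] using h
    rw [show (∫ x, |f x| ^ p ∂μ) = ∫ x, ‖|f x| ^ p‖ ∂μ from
        integral_congr_ae (ae_of_all _ fun x =>
          (Real.norm_of_nonneg (Real.rpow_nonneg (abs_nonneg _) _)).symm),
      integral_norm_eq_lintegral_enorm hfp_int.aestronglyMeasurable,
      ← eLpNorm_one_eq_lintegral_enorm, h1, ← ENNReal.toReal_rpow]
  have hIgq : ∫ x, |g x| ^ q ∂μ = B ^ q := by
    have h1 : eLpNorm (fun x => |g x| ^ q) 1 μ = eLpNorm g (ENNReal.ofReal q) μ ^ q := by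
      have h := eLpNorm_norm_rpow (p := 1) (μ := μ) g hq0
      simpa [Real.norm_eq_abs, one_mul] using h
    rw [show (∫ x, |g x| ^ q ∂μ) = ∫ x, ‖|g x| ^ q‖ ∂μ from
        integral_congr_ae (ae_of_all _ fun x =>
          (Real.norm_of_nonneg (Real.rpow_nonneg (abs_nonneg _) _)).symm),
      integral_norm_eq_lintegral_enorm hgq_int.aestronglyMeasurable,
      ← eLpNorm_one_eq_lintegral_enorm, h1, ← ENNReal.toReal_rpow]
  -- L² membership of normalized powers
  have hu2 : MemLp (fun x => |f x| ^ (p / 2)) 2 μ := by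
    have h1 := hf.norm_rpow_div (ENNReal.ofReal (p / 2))
    rw [ENNReal.toReal_ofReal (by positivity)] at h1
    have h2 : ENNReal.ofReal p / ENNReal.ofReal (p / 2) = 2 := by
      rw [← ENNReal.ofReal_div_of_pos (by positivity),
        show p / (p / 2) = 2 by field_simp]
      norm_num
    rw [h2] at h1
    simpa [Real.norm_eq_abs] using h1
  have hv2 : MemLp (fun x => |g x| ^ (q / 2)) 2 μ := by
    have h1 := hg.norm_rpow_div (ENNReal.ofReal (q / 2))
    rw [ENNReal.toReal_ofReal (by positivity)] at h1
    have h2 : ENNReal.ofReal q / ENNReal.ofReal (q / 2) = 2 := by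
      rw [← ENNReal.ofReal_div_of_pos (by positivity),
        show q / (q / 2) = 2 by field_simp]
      norm_num
    rw [h2] at h1
    simpa [Real.norm_eq_abs] using h1
  set h : X → ℝ := fun x =>
    |f x| ^ (p / 2) / A ^ (p / 2) - |g x| ^ (q / 2) / B ^ (q / 2) with hh_def
  have hh2 : MemLp h 2 μ := by
    have hthis := (hu2.const_mul (A ^ (p / 2))⁻¹).sub (hv2.const_mul (B ^ (q / 2))⁻¹)
    exact MemLp.ae_eq (ae_of_all _ fun x => by
      simp only [Pi.sub_apply, hh_def]; ring) hthis
  have hsq_int : Integrable (fun x => h x ^ 2) μ := hh2.integrable_sq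
  set S := (eLpNorm h 2 μ).toReal with hS_def
  have hIS : ∫ x, h x ^ 2 ∂μ = S ^ 2 := by
    have h2 : (fun x => ‖h x‖ ^ (2:ℝ)) = fun x => h x ^ 2 := by
      funext x
      rw [show ((2:ℝ)) = ((2:ℕ):ℝ) by norm_num, Real.rpow_natCast]
      simp [Real.norm_eq_abs, sq_abs]
    have h1 : eLpNorm (fun x => h x ^ 2) 1 μ = eLpNorm h 2 μ ^ (2:ℝ) := by
      have := eLpNorm_norm_rpow (p := 1) (μ := μ) h (by norm_num : (0:ℝ) < 2)
      rw [h2] at this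
      simpa using this
    rw [show (∫ x, h x ^ 2 ∂μ) = ∫ x, ‖h x ^ 2‖ ∂μ from
        integral_congr_ae (ae_of_all _ fun x => (Real.norm_of_nonneg (sq_nonneg _)).symm),
      integral_norm_eq_lintegral_enorm hsq_int.aestronglyMeasurable,
      ← eLpNorm_one_eq_lintegral_enorm, h1, ← ENNReal.toReal_rpow,
      show ((2:ℝ)) = ((2:ℕ):ℝ) by norm_num, Real.rpow_natCast]
  -- integrability of the product
  have hmul : Integrable (fun x => f x * g x) μ := by
    refine ((hfp_int.div_const p).add (hgq_int.div_const q)).mono'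
      (hf.aestronglyMeasurable.mul hg.aestronglyMeasurable) (ae_of_all _ fun x => ?_)
    have hy := young_refined hp1 hp2 hq (abs_nonneg (f x)) (abs_nonneg (g x))
    have hnn : 0 ≤ (1 / q) * (|f x| ^ (p / 2) - |g x| ^ (q / 2)) ^ 2 := by positivity
    rw [Real.norm_eq_abs, abs_mul]
    simp only [Pi.add_apply]
    linarith
  -- pointwise inequality
  have hpt : ∀ x, |f x * g x| / (A * B) ≤
      |f x| ^ p / A ^ p / p + |g x| ^ q / B ^ q / q - (1 / q) * h x ^ 2 := by
    intro x
    have hy := young_refined hp1 hp2 hq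
      (a := |f x| / A) (b := |g x| / B) (by positivity) (by positivity)
    calc |f x * g x| / (A * B) = (|f x| / A) * (|g x| / B) := by
          rw [abs_mul, div_mul_div_comm]
      _ ≤ (|f x| / A) ^ p / p + (|g x| / B) ^ q / q
          - (1 / q) * ((|f x| / A) ^ (p / 2) - (|g x| / B) ^ (q / 2)) ^ 2 := hy
      _ = |f x| ^ p / A ^ p / p + |g x| ^ q / B ^ q / q - (1 / q) * h x ^ 2 := by
          rw [hh_def]
          rw [Real.div_rpow (abs_nonneg _) hA0.le, Real.div_rpow (abs_nonneg _) hA0.le,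
            Real.div_rpow (abs_nonneg _) hB0.le, Real.div_rpow (abs_nonneg _) hB0.le]
  -- integrate
  have hint_lhs : Integrable (fun x => |f x * g x| / (A * B)) μ := (hmul.abs).div_const _
  have hint_r1 : Integrable (fun x => |f x| ^ p / A ^ p / p) μ :=
    (hfp_int.div_const _).div_const _
  have hint_r2 : Integrable (fun x => |g x| ^ q / B ^ q / q) μ :=
    (hgq_int.div_const _).div_const _
  have hint_r3 : Integrable (fun x => (1 / q) * h x ^ 2) μ := hsq_int.const_mul _
  have hint_r12 : Integrable (fun x => |f x| ^ p / A ^ p / p + |g x| ^ q / B ^ q / q) μ :=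
    hint_r1.add hint_r2
  have hmono := integral_mono hint_lhs ((hint_r1.add hint_r2).sub hint_r3) hpt
  simp only [Pi.add_apply, Pi.sub_apply] at hmono
  rw [integral_sub hint_r12 hint_r3, integral_add hint_r1 hint_r2,
    integral_div, integral_div, integral_div, integral_div, integral_div,
    integral_const_mul, hIfp, hIgq, hIS] at hmono
  have hApos : (0:ℝ) < A ^ p := Real.rpow_pos_of_pos hA0 p
  have hBpos : (0:ℝ) < B ^ q := Real.rpow_pos_of_pos hB0 q
  have hpq1 : 1 / p + 1 / q = 1 := by
    have hqp : q * (p - 1) = p := by rw [hq]; field_simp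
    field_simp [hp0.ne', hq0.ne']
    linear_combination -hqp
  have hmono' : (∫ x, |f x * g x| ∂μ) / (A * B) ≤ 1 - 1 / q * S ^ 2 := by
    rw [div_self hApos.ne', div_self hBpos.ne'] at hmono
    calc (∫ x, |f x * g x| ∂μ) / (A * B) ≤ 1 / p + 1 / q - 1 / q * S ^ 2 := hmono
      _ = 1 - 1 / q * S ^ 2 := by rw [hpq1]
  have hnorm1 : (eLpNorm (fun x => f x * g x) 1 μ).toReal = ∫ x, |f x * g x| ∂μ := by
    rw [eLpNorm_one_eq_lintegral_enorm,
      ← integral_norm_eq_lintegral_enorm hmul.aestronglyMeasurable]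
    simp only [Real.norm_eq_abs]
  rw [hnorm1]
  rw [div_le_iff₀ (by positivity : (0:ℝ) < A * B)] at hmono'
  calc (∫ x, |f x * g x| ∂μ) ≤ (1 - 1 / q * S ^ 2) * (A * B) := hmono'
    _ = A * B * (1 - 1 / q * S ^ 2) := by ring
end

section
/- Let (X, μ) be a measure space, 1 < p ≤ 2, q = p/(p-1), f ∈ L^p and g ∈ L^q with ‖f‖_p > 0 and ‖g‖_q > 0. Then ‖f‖_p‖g‖_q·(1 - (1/p)·‖|f|^{p/2}/‖f‖_p^{p/2} - |g|^{q/2}/‖g‖_q^{q/2}‖_2²) ≤ ‖fg‖_1. -/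
open MeasureTheory ENNReal

lemma stmt5_aux {p q : ℝ} (hpq : p.HolderConjugate q) (hp2 : p ≤ 2) {u v : ℝ}
    (hu : 0 ≤ u) (hv : 0 ≤ v) :
    (1 - 2 / p) * v ^ q + (2 / p) * (u ^ (p / 2) * v ^ (q / 2)) ≤ u * v := by
  have hp0 : 0 < p := hpq.pos
  have hq0 : 0 < q := hpq.symm.pos
  rcases eq_or_lt_of_le hv with hv0 | hv0
  · rw [← hv0, Real.zero_rpow hq0.ne', Real.zero_rpow (by positivity : q / 2 ≠ 0)]
    simp
  · set r : ℝ := u ^ (p / 2) / v ^ (q / 2) with hr_def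
    have hvq2 : (0:ℝ) < v ^ (q / 2) := Real.rpow_pos_of_pos hv0 _
    have hvq : (0:ℝ) < v ^ q := Real.rpow_pos_of_pos hv0 _
    have hr : 0 ≤ r := div_nonneg (Real.rpow_nonneg hu _) hvq2.le
    have halpha : 1 ≤ 2 / p := by
      rw [le_div_iff₀ hp0]; linarith
    have key : 1 + (2 / p) * (r - 1) ≤ r ^ (2 / p) := by
      have h := one_add_mul_self_le_rpow_one_add (s := r - 1) (by linarith) halpha
      simpa using h
    have hvqsplit : v ^ q = v ^ (q / 2) * v ^ (q / 2) := by
      rw [← Real.rpow_add hv0]; ring_nf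
    have e1 : u ^ (p / 2) * v ^ (q / 2) = r * v ^ q := by
      rw [hr_def, hvqsplit]; field_simp
    have hq1 : q - q / p = 1 := by
      have h := hpq.inv_add_inv_eq_one
      field_simp at h ⊢
      nlinarith [h]
    have e2 : u * v = r ^ (2 / p) * v ^ q := by
      have hrp : r ^ (2 / p) = u / v ^ (q / p) := by
        rw [hr_def, Real.div_rpow (Real.rpow_nonneg hu _) hvq2.le,
          ← Real.rpow_mul hu, ← Real.rpow_mul hv0.le]
        congr 1
        · congr 1; field_simp; simp
        · field_simp
      rw [hrp, div_mul_eq_mul_div, mul_div_assoc, ← Real.rpow_sub hv0, hq1,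
        Real.rpow_one]
    rw [e1, e2]
    nlinarith [mul_le_mul_of_nonneg_right key hvq.le]

theorem stmt_5 {X : Type*} [MeasurableSpace X] (μ : Measure X)
    (p q : ℝ) (hp1 : 1 < p) (hp2 : p ≤ 2) (hq : q = p / (p - 1))
    (f g : X → ℝ)
    (hf : MemLp f (ENNReal.ofReal p) μ) (hg : MemLp g (ENNReal.ofReal q) μ)
    (hf0 : 0 < (eLpNorm f (ENNReal.ofReal p) μ).toReal)
    (hg0 : 0 < (eLpNorm g (ENNReal.ofReal q) μ).toReal) :
    (eLpNorm f (ENNReal.ofReal p) μ).toReal * (eLpNorm g (ENNReal.ofReal q) μ).toReal *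
        (1 - (1 / p) *
          (eLpNorm (fun x =>
              |f x| ^ (p / 2) / (eLpNorm f (ENNReal.ofReal p) μ).toReal ^ (p / 2) -
              |g x| ^ (q / 2) / (eLpNorm g (ENNReal.ofReal q) μ).toReal ^ (q / 2)) 2 μ).toReal ^ 2) ≤
      (eLpNorm (fun x => f x * g x) 1 μ).toReal := by
  have hp0 : (0:ℝ) < p := by linarith
  have hpq : p.HolderConjugate q := hq ▸ Real.HolderConjugate.conjExponent hp1
  have hq0 : (0:ℝ) < q := hpq.symm.pos
  have hPne : ENNReal.ofReal p ≠ 0 := by simp [hp0]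
  have hQne : ENNReal.ofReal q ≠ 0 := by simp [hq0]
  set A := (eLpNorm f (ENNReal.ofReal p) μ).toReal with hA_def
  set B := (eLpNorm g (ENNReal.ofReal q) μ).toReal with hB_def
  have hA0 : 0 < A := hf0
  have hB0 : 0 < B := hg0
  -- integral formulas for A^p and B^q
  have hIf0 : (0:ℝ) ≤ ∫ x, |f x| ^ p ∂μ :=
    integral_nonneg fun x => Real.rpow_nonneg (abs_nonneg _) _
  have hIg0 : (0:ℝ) ≤ ∫ x, |g x| ^ q ∂μ :=
    integral_nonneg fun x => Real.rpow_nonneg (abs_nonneg _) _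
  have hA_eq : A = (∫ x, |f x| ^ p ∂μ) ^ p⁻¹ := by
    rw [hA_def, hf.eLpNorm_eq_integral_rpow_norm hPne ENNReal.ofReal_ne_top]
    simp only [ENNReal.toReal_ofReal hp0.le, Real.norm_eq_abs]
    rw [ENNReal.toReal_ofReal (by positivity)]
  have hfInt : ∫ x, |f x| ^ p ∂μ = A ^ p := by
    rw [hA_eq, ← Real.rpow_mul hIf0, inv_mul_cancel₀ hp0.ne', Real.rpow_one]
  have hB_eq : B = (∫ x, |g x| ^ q ∂μ) ^ q⁻¹ := by
    rw [hB_def, hg.eLpNorm_eq_integral_rpow_norm hQne ENNReal.ofReal_ne_top]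
    simp only [ENNReal.toReal_ofReal hq0.le, Real.norm_eq_abs]
    rw [ENNReal.toReal_ofReal (by positivity)]
  have hgInt : ∫ x, |g x| ^ q ∂μ = B ^ q := by
    rw [hB_eq, ← Real.rpow_mul hIg0, inv_mul_cancel₀ hq0.ne', Real.rpow_one]
  -- membership of half powers in L²
  have hφ : MemLp (fun x => |f x| ^ (p / 2)) 2 μ := by
    have h2 : ENNReal.ofReal p / ENNReal.ofReal (p / 2) = 2 := by
      rw [← ENNReal.ofReal_div_of_pos (by positivity)]
      rw [show p / (p / 2) = 2 by field_simp]
      norm_num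
    have := hf.norm_rpow_div (ENNReal.ofReal (p / 2))
    rw [h2] at this
    simpa [ENNReal.toReal_ofReal (by positivity : (0:ℝ) ≤ p / 2), Real.norm_eq_abs] using this
  have hψ : MemLp (fun x => |g x| ^ (q / 2)) 2 μ := by
    have h2 : ENNReal.ofReal q / ENNReal.ofReal (q / 2) = 2 := by
      rw [← ENNReal.ofReal_div_of_pos (by positivity)]
      rw [show q / (q / 2) = 2 by field_simp]
      norm_num
    have := hg.norm_rpow_div (ENNReal.ofReal (q / 2))
    rw [h2] at this
    simpa [ENNReal.toReal_ofReal (by positivity : (0:ℝ) ≤ q / 2), Real.norm_eq_abs] using this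
  -- integrabilities
  have int_fp : Integrable (fun x => |f x| ^ p) μ := by
    simpa [Real.norm_eq_abs, ENNReal.toReal_ofReal hp0.le] using
      hf.integrable_norm_rpow hPne ENNReal.ofReal_ne_top
  have int_gq : Integrable (fun x => |g x| ^ q) μ := by
    simpa [Real.norm_eq_abs, ENNReal.toReal_ofReal hq0.le] using
      hg.integrable_norm_rpow hQne ENNReal.ofReal_ne_top
  have int_pp : Integrable (fun x => |f x| ^ (p / 2) * |g x| ^ (q / 2)) μ := by
    have h12 : (1:ℝ≥0∞) / 1 = 1 / 2 + 1 / 2 := by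
      rw [ENNReal.div_add_div_same, one_div_one, one_add_one_eq_two,
        ENNReal.div_self two_ne_zero ENNReal.ofNat_ne_top]
    have := hψ.smul hφ (r := 1) (hpqr := ⟨by simpa only [one_div] using h12.symm⟩)
    rw [memLp_one_iff_integrable] at this
    simpa [smul_eq_mul, Pi.mul_def] using this
  have int_fg : Integrable (fun x => f x * g x) μ := by
    have h11 : (1:ℝ≥0∞) / 1 = 1 / ENNReal.ofReal p + 1 / ENNReal.ofReal q := by
      rw [one_div, one_div, one_div, ← ENNReal.ofReal_inv_of_pos hp0,
        ← ENNReal.ofReal_inv_of_pos hq0, ← ENNReal.ofReal_add (by positivity) (by positivity),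
        hpq.inv_add_inv_eq_one, inv_one, ENNReal.ofReal_one]
    have := hg.smul hf (r := 1) (hpqr := ⟨by simpa only [one_div] using h11.symm⟩)
    rw [memLp_one_iff_integrable] at this
    simpa [smul_eq_mul, Pi.mul_def] using this
  -- L² membership of the difference function
  set Ah := A ^ (p / 2) with hAh_def
  set Bh := B ^ (q / 2) with hBh_def
  have hAh0 : 0 < Ah := Real.rpow_pos_of_pos hA0 _
  have hBh0 : 0 < Bh := Real.rpow_pos_of_pos hB0 _
  set h : X → ℝ := fun x => |f x| ^ (p / 2) / Ah - |g x| ^ (q / 2) / Bh with hh_def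
  have hhmem : MemLp h 2 μ := by
    have h1 : MemLp (fun x => Ah⁻¹ * |f x| ^ (p / 2)) 2 μ := hφ.const_mul _
    have h2 : MemLp (fun x => Bh⁻¹ * |g x| ^ (q / 2)) 2 μ := hψ.const_mul _
    have := h1.sub h2
    convert this using 1
    funext x
    simp [hh_def, div_eq_inv_mul]
  -- squared power identity
  have sq_rpow : ∀ (s : ℝ) (a : ℝ), 0 ≤ a → s ≠ 0 → (a ^ (s / 2)) ^ (2:ℕ) = a ^ s := by
    intro s a ha hs
    rw [sq, ← Real.rpow_add' ha (by simpa using hs)]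
    ring_nf
  -- S² = ∫ h²
  have hIh0 : (0:ℝ) ≤ ∫ x, (h x) ^ (2:ℕ) ∂μ := integral_nonneg fun x => sq_nonneg _
  have hS2 : (eLpNorm h 2 μ).toReal ^ (2:ℕ) = ∫ x, (h x) ^ (2:ℕ) ∂μ := by
    rw [hhmem.eLpNorm_eq_integral_rpow_norm two_ne_zero ENNReal.ofNat_ne_top]
    have htr : (2:ℝ≥0∞).toReal = (2:ℝ) := by norm_num
    simp only [htr]
    have hnorm : ∀ x, ‖h x‖ ^ (2:ℝ) = (h x) ^ (2:ℕ) := by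
      intro x
      rw [show (2:ℝ) = ((2:ℕ):ℝ) by norm_num, Real.rpow_natCast, Real.norm_eq_abs, sq_abs]
    simp_rw [hnorm]
    rw [ENNReal.toReal_ofReal (Real.rpow_nonneg hIh0 _), ← Real.rpow_natCast _ 2,
      ← Real.rpow_mul hIh0]
    norm_num
  -- expand ∫ h²
  set T := ∫ x, |f x| ^ (p / 2) * |g x| ^ (q / 2) ∂μ with hT_def
  have hAh2 : Ah ^ (2:ℕ) = A ^ p := sq_rpow p A hA0.le hp0.ne'
  have hBh2 : Bh ^ (2:ℕ) = B ^ q := sq_rpow q B hB0.le hq0.ne'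
  have hApos : (0:ℝ) < A ^ p := Real.rpow_pos_of_pos hA0 _
  have hBqpos : (0:ℝ) < B ^ q := Real.rpow_pos_of_pos hB0 _
  have hone : ∀ x : X, (h x) ^ (2:ℕ) =
      (Ah ^ (2:ℕ))⁻¹ * |f x| ^ p + (Bh ^ (2:ℕ))⁻¹ * |g x| ^ q -
        (2 * (Ah * Bh)⁻¹) * (|f x| ^ (p / 2) * |g x| ^ (q / 2)) := by
    intro x
    have e1 := sq_rpow p (|f x|) (abs_nonneg _) hp0.ne'
    have e2 := sq_rpow q (|g x|) (abs_nonneg _) hq0.ne'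
    rw [hh_def, ← e1, ← e2]
    field_simp
    ring
  have hS2' : (eLpNorm h 2 μ).toReal ^ (2:ℕ) = 2 - 2 * (Ah * Bh)⁻¹ * T := by
    rw [hS2]
    calc ∫ x, (h x) ^ (2:ℕ) ∂μ
        = ∫ x, ((Ah ^ (2:ℕ))⁻¹ * |f x| ^ p + (Bh ^ (2:ℕ))⁻¹ * |g x| ^ q -
            (2 * (Ah * Bh)⁻¹) * (|f x| ^ (p / 2) * |g x| ^ (q / 2))) ∂μ := by
          exact integral_congr_ae (Filter.Eventually.of_forall hone)
      _ = (Ah ^ (2:ℕ))⁻¹ * (∫ x, |f x| ^ p ∂μ) + (Bh ^ (2:ℕ))⁻¹ * (∫ x, |g x| ^ q ∂μ) -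
            (2 * (Ah * Bh)⁻¹) * T := by
          have i1 : Integrable (fun x => (Ah ^ (2:ℕ))⁻¹ * |f x| ^ p) μ := int_fp.const_mul _
          have i2 : Integrable (fun x => (Bh ^ (2:ℕ))⁻¹ * |g x| ^ q) μ := int_gq.const_mul _
          have i12 : Integrable (fun x => (Ah ^ (2:ℕ))⁻¹ * |f x| ^ p +
              (Bh ^ (2:ℕ))⁻¹ * |g x| ^ q) μ := i1.add i2
          have i3 : Integrable (fun x =>
              (2 * (Ah * Bh)⁻¹) * (|f x| ^ (p / 2) * |g x| ^ (q / 2))) μ := int_pp.const_mul _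
          rw [integral_sub i12 i3, integral_add i1 i2, integral_const_mul,
            integral_const_mul, integral_const_mul]
      _ = 2 - 2 * (Ah * Bh)⁻¹ * T := by
          rw [hfInt, hgInt, hAh2, hBh2, inv_mul_cancel₀ hApos.ne', inv_mul_cancel₀ hBqpos.ne']
          ring
  -- right-hand side
  have hRHS : (eLpNorm (fun x => f x * g x) 1 μ).toReal = ∫ x, |f x * g x| ∂μ := by
    have hI0 : (0:ℝ) ≤ ∫ x, |f x * g x| ∂μ := integral_nonneg fun x => abs_nonneg _
    rw [(memLp_one_iff_integrable.mpr int_fg).eLpNorm_eq_integral_rpow_norm one_ne_zero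
      ENNReal.one_ne_top]
    simp only [ENNReal.toReal_one, Real.rpow_one, inv_one, Real.norm_eq_abs]
    exact ENNReal.toReal_ofReal hI0
  -- pointwise bound
  have hL : ∀ x, (A * B * (1 - 2 / p) * (B ^ q)⁻¹) * |g x| ^ q +
      (A * B * (2 / p) * (Ah * Bh)⁻¹) * (|f x| ^ (p / 2) * |g x| ^ (q / 2)) ≤ |f x * g x| := by
    intro x
    have haux := stmt5_aux hpq hp2 (u := |f x| / A) (v := |g x| / B)
      (by positivity) (by positivity)
    rw [Real.div_rpow (abs_nonneg _) hB0.le, Real.div_rpow (abs_nonneg _) hA0.le,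
      Real.div_rpow (abs_nonneg _) hB0.le] at haux
    have key := mul_le_mul_of_nonneg_left haux (mul_pos hA0 hB0).le
    have e3 : A * B * (|f x| / A * (|g x| / B)) = |f x * g x| := by
      rw [abs_mul]; field_simp
    have e4 : A * B * ((1 - 2 / p) * (|g x| ^ q / B ^ q) +
        2 / p * (|f x| ^ (p / 2) / Ah * (|g x| ^ (q / 2) / Bh))) =
        (A * B * (1 - 2 / p) * (B ^ q)⁻¹) * |g x| ^ q +
        (A * B * (2 / p) * (Ah * Bh)⁻¹) * (|f x| ^ (p / 2) * |g x| ^ (q / 2)) := by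
      field_simp
    rw [e3, e4] at key
    exact key
  have intL : Integrable (fun x => (A * B * (1 - 2 / p) * (B ^ q)⁻¹) * |g x| ^ q +
      (A * B * (2 / p) * (Ah * Bh)⁻¹) * (|f x| ^ (p / 2) * |g x| ^ (q / 2))) μ :=
    (int_gq.const_mul _).add (int_pp.const_mul _)
  have hmono : ∫ x, ((A * B * (1 - 2 / p) * (B ^ q)⁻¹) * |g x| ^ q +
      (A * B * (2 / p) * (Ah * Bh)⁻¹) * (|f x| ^ (p / 2) * |g x| ^ (q / 2))) ∂μ ≤
      ∫ x, |f x * g x| ∂μ :=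
    integral_mono intL int_fg.abs hL
  have hIntL : ∫ x, ((A * B * (1 - 2 / p) * (B ^ q)⁻¹) * |g x| ^ q +
      (A * B * (2 / p) * (Ah * Bh)⁻¹) * (|f x| ^ (p / 2) * |g x| ^ (q / 2))) ∂μ =
      A * B * (1 - 2 / p) + (A * B * (2 / p) * (Ah * Bh)⁻¹) * T := by
    have j1 : Integrable (fun x => (A * B * (1 - 2 / p) * (B ^ q)⁻¹) * |g x| ^ q) μ :=
      int_gq.const_mul _
    have j2 : Integrable (fun x =>
        (A * B * (2 / p) * (Ah * Bh)⁻¹) * (|f x| ^ (p / 2) * |g x| ^ (q / 2))) μ :=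
      int_pp.const_mul _
    rw [integral_add j1 j2, integral_const_mul, integral_const_mul, hgInt, ← hT_def]
    field_simp
  rw [hRHS]
  refine le_trans ?_ hmono
  rw [hIntL, hS2']
  have : A * B * (1 - 1 / p * (2 - 2 * (Ah * Bh)⁻¹ * T)) =
      A * B * (1 - 2 / p) + A * B * (2 / p) * (Ah * Bh)⁻¹ * T := by
    field_simp
    ring
  rw [this]
end

section
/- Let (X, μ) be a measure space, 2 ≤ p < ∞, q = p/(p-1), f ∈ L^p and g ∈ L^q with ‖f‖_p > 0 and ‖g‖_q > 0. Then ‖f‖_p‖g‖_q·(1 - (1/q)·‖|f|^{p/2}/‖f‖_p^{p/2} - |g|^{q/2}/‖g‖_q^{q/2}‖_2²) ≤ ‖fg‖_1 ≤ ‖f‖_p‖g‖_q·(1 - (1/p)·‖|f|^{p/2}/‖f‖_p^{p/2} - |g|^{q/2}/‖g‖_q^{q/2}‖_2²). -/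
open MeasureTheory
open scoped ENNReal NNReal

lemma young_up {p q u v : ℝ} (hp : 2 ≤ p) (hpq : p.HolderConjugate q)
    (hu : 0 ≤ u) (hv : 0 ≤ v) :
    u ^ (2/p) * v ^ (2/q) ≤ (1 - 2/p) * v^2 + (2/p) * (u*v) := by
  have hp0 : 0 < p := hpq.pos
  have hq0 : 0 < q := hpq.symm.pos
  have hinv : 1/p + 1/q = 1 := by
    have := hpq.inv_add_inv_eq_one; rw [inv_eq_one_div, inv_eq_one_div] at this; linarith
  have h2q : 2/q = 2 - 2/p := by
    rw [div_eq_mul_one_div, div_eq_mul_one_div 2 p]; linarith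
  by_cases hv0 : v = 0
  · subst hv0
    rw [Real.zero_rpow (by positivity)]
    simp
  have hv' : 0 < v := lt_of_le_of_ne hv (Ne.symm hv0)
  have key := Real.geom_mean_le_arith_mean2_weighted
    (w₁ := 2/p) (w₂ := 1 - 2/p) (p₁ := u*v) (p₂ := v^2)
    (by positivity) (by rw [sub_nonneg]; rw [div_le_one hp0]; linarith)
    (mul_nonneg hu hv) (sq_nonneg v) (by ring)
  have hid : (u*v) ^ (2/p) * (v^2) ^ (1 - 2/p) = u ^ (2/p) * v ^ (2/q) := by
    rw [Real.mul_rpow hu hv, ← Real.rpow_two v, ← Real.rpow_mul hv,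
      mul_assoc, ← Real.rpow_add hv', h2q]
    ring_nf
  rw [hid] at key
  linarith

lemma young_low {p q u v : ℝ} (hp : 2 ≤ p) (hpq : p.HolderConjugate q)
    (hu : 0 ≤ u) (hv : 0 ≤ v) :
    (2/p - 1) * u^2 + (2/q) * (u*v) ≤ u ^ (2/p) * v ^ (2/q) := by
  have hp0 : 0 < p := hpq.pos
  have hq0 : 0 < q := hpq.symm.pos
  have hinv : 1/p + 1/q = 1 := by
    have := hpq.inv_add_inv_eq_one; rw [inv_eq_one_div, inv_eq_one_div] at this; linarith
  have hq2 : q ≤ 2 := by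
    have h1 : 1/p ≤ 1/2 := by rw [div_le_div_iff₀ hp0 two_pos]; linarith
    have h2 : (1:ℝ)/2 ≤ 1/q := by linarith
    rw [div_le_div_iff₀ two_pos hq0] at h2
    linarith
  have hqp : q/p = q - 1 := hpq.symm.div_conj_eq_sub_one
  by_cases hu0 : u = 0
  · subst hu0
    rw [Real.zero_rpow (by positivity)]
    simp
  have hu' : 0 < u := lt_of_le_of_ne hu (Ne.symm hu0)
  have key := Real.geom_mean_le_arith_mean2_weighted
    (w₁ := 1 - q/2) (w₂ := q/2) (p₁ := u^2) (p₂ := u ^ (2/p) * v ^ (2/q))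
    (by linarith) (by positivity) (sq_nonneg u) (by positivity) (by ring)
  have hid : (u^2) ^ (1 - q/2) * (u ^ (2/p) * v ^ (2/q)) ^ (q/2) = u * v := by
    rw [Real.mul_rpow (by positivity) (by positivity), ← Real.rpow_two u,
      ← Real.rpow_mul hu, ← Real.rpow_mul hu, ← Real.rpow_mul hv]
    have e1 : 2/q * (q/2) = 1 := by field_simp
    rw [e1, Real.rpow_one, ← mul_assoc, ← Real.rpow_add hu']
    have e2 : 2 * (1 - q/2) + 2/p * (q/2) = 1 := by
      have : 2/p * (q/2) = q/p := by ring
      rw [this, hqp]; ring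
    rw [e2, Real.rpow_one]
  rw [hid] at key
  -- key : u*v ≤ (1 - q/2)*u^2 + (q/2)*(u^(2/p)*v^(2/q))
  have key2 := mul_le_mul_of_nonneg_left key (by positivity : (0:ℝ) ≤ 2/q)
  have e3 : 2/q * ((1 - q/2) * u^2 + q/2 * (u ^ (2/p) * v ^ (2/q)))
      = (2/q - 1) * u^2 + (u ^ (2/p) * v ^ (2/q)) := by
    field_simp
  rw [e3] at key2
  have e4 : 2/q - 1 = 1 - 2/p := by
    rw [div_eq_mul_one_div, div_eq_mul_one_div 2 p]; linarith
  nlinarith [key2]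

lemma rpow_sq_eq {x : ℝ} (hx : 0 ≤ x) (r : ℝ) : (x ^ r) ^ 2 = x ^ (r * 2) := by
  rw [← Real.rpow_two (x ^ r), ← Real.rpow_mul hx]

theorem stmt_6 {X : Type*} [MeasurableSpace X] (μ : Measure X)
    (p q : ℝ) (hp : 2 ≤ p) (hq : q = p / (p - 1))
    (f g : X → ℝ)
    (hf : MemLp f (ENNReal.ofReal p) μ) (hg : MemLp g (ENNReal.ofReal q) μ)
    (hf0 : 0 < (eLpNorm f (ENNReal.ofReal p) μ).toReal)
    (hg0 : 0 < (eLpNorm g (ENNReal.ofReal q) μ).toReal) :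
    (eLpNorm f (ENNReal.ofReal p) μ).toReal * (eLpNorm g (ENNReal.ofReal q) μ).toReal *
        (1 - (1 / q) *
          (eLpNorm (fun x =>
              |f x| ^ (p / 2) / (eLpNorm f (ENNReal.ofReal p) μ).toReal ^ (p / 2) -
              |g x| ^ (q / 2) / (eLpNorm g (ENNReal.ofReal q) μ).toReal ^ (q / 2)) 2 μ).toReal ^ 2) ≤
      (eLpNorm (fun x => f x * g x) 1 μ).toReal ∧
    (eLpNorm (fun x => f x * g x) 1 μ).toReal ≤
      (eLpNorm f (ENNReal.ofReal p) μ).toReal * (eLpNorm g (ENNReal.ofReal q) μ).toReal *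
        (1 - (1 / p) *
          (eLpNorm (fun x =>
              |f x| ^ (p / 2) / (eLpNorm f (ENNReal.ofReal p) μ).toReal ^ (p / 2) -
              |g x| ^ (q / 2) / (eLpNorm g (ENNReal.ofReal q) μ).toReal ^ (q / 2)) 2 μ).toReal ^ 2) := by
  have hp1 : 1 < p := by linarith
  have hp0 : 0 < p := by linarith
  have hpq : p.HolderConjugate q := (Real.holderConjugate_iff_eq_conjExponent hp1).2 hq
  have hq0 : 0 < q := hpq.symm.pos
  have hinv : 1/p + 1/q = 1 := by
    have := hpq.inv_add_inv_eq_one; rw [inv_eq_one_div, inv_eq_one_div] at this; linarith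
  have hP0 : (ENNReal.ofReal p) ≠ 0 := (ENNReal.ofReal_pos.2 hp0).ne'
  have hQ0 : (ENNReal.ofReal q) ≠ 0 := (ENNReal.ofReal_pos.2 hq0).ne'
  have hPt : (ENNReal.ofReal p) ≠ ⊤ := ENNReal.ofReal_ne_top
  have hQt : (ENNReal.ofReal q) ≠ ⊤ := ENNReal.ofReal_ne_top
  set a := (eLpNorm f (ENNReal.ofReal p) μ).toReal with ha_def
  set b := (eLpNorm g (ENNReal.ofReal q) μ).toReal with hb_def
  -- values of a, b as integrals
  have hfa : a = (∫ x, |f x| ^ p ∂μ) ^ p⁻¹ := by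
    rw [ha_def, hf.eLpNorm_eq_integral_rpow_norm hP0 hPt]
    simp only [ENNReal.toReal_ofReal hp0.le, Real.norm_eq_abs]
    rw [ENNReal.toReal_ofReal (by positivity)]
  have hgb : b = (∫ x, |g x| ^ q ∂μ) ^ q⁻¹ := by
    rw [hb_def, hg.eLpNorm_eq_integral_rpow_norm hQ0 hQt]
    simp only [ENNReal.toReal_ofReal hq0.le, Real.norm_eq_abs]
    rw [ENNReal.toReal_ofReal (by positivity)]
  have hIfnn : 0 ≤ ∫ x, |f x| ^ p ∂μ := integral_nonneg fun x => by positivity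
  have hIgnn : 0 ≤ ∫ x, |g x| ^ q ∂μ := integral_nonneg fun x => by positivity
  have hIf : ∫ x, |f x| ^ p ∂μ = a ^ p := by
    rw [hfa, ← Real.rpow_mul hIfnn, inv_mul_cancel₀ hp0.ne', Real.rpow_one]
  have hIg : ∫ x, |g x| ^ q ∂μ = b ^ q := by
    rw [hgb, ← Real.rpow_mul hIgnn, inv_mul_cancel₀ hq0.ne', Real.rpow_one]
  -- membership of half-power functions in L²
  have hdiv2 : ∀ r : ℝ, 0 < r →
      ENNReal.ofReal r / ENNReal.ofReal (r/2) = 2 := by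
    intro r hr
    have h2 : r / (r/2) = 2 := by field_simp
    rw [← ENNReal.ofReal_div_of_pos (by positivity), h2]
    norm_num
  have hf2 : MemLp (fun x => |f x| ^ (p/2)) 2 μ := by
    have h := hf.norm_rpow_div (ENNReal.ofReal (p/2))
    rw [ENNReal.toReal_ofReal (by positivity), hdiv2 p hp0] at h
    simpa [Real.norm_eq_abs] using h
  have hg2 : MemLp (fun x => |g x| ^ (q/2)) 2 μ := by
    have h := hg.norm_rpow_div (ENNReal.ofReal (q/2))
    rw [ENNReal.toReal_ofReal (by positivity), hdiv2 q hq0] at h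
    simpa [Real.norm_eq_abs] using h
  have hU : MemLp (fun x => |f x| ^ (p/2) / a ^ (p/2)) 2 μ := by
    simpa [div_eq_inv_mul] using hf2.const_mul (a ^ (p/2))⁻¹
  have hV : MemLp (fun x => |g x| ^ (q/2) / b ^ (q/2)) 2 μ := by
    simpa [div_eq_inv_mul] using hg2.const_mul (b ^ (q/2))⁻¹
  set U : X → ℝ := fun x => |f x| ^ (p/2) / a ^ (p/2) with hU_def
  set V : X → ℝ := fun x => |g x| ^ (q/2) / b ^ (q/2) with hV_def
  have hUV : MemLp (fun x => U x * V x) 1 μ := by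
    have h := hV.smul (φ := U) hU (p := 2) (q := 2) (r := 1) (hpqr := ⟨by
      rw [ENNReal.inv_two_add_inv_two, inv_one]⟩)
    exact h
  have hUVint : Integrable (fun x => U x * V x) μ := memLp_one_iff_integrable.mp hUV
  have hfg : MemLp (fun x => f x * g x) 1 μ := by
    have h := hg.smul (φ := f) hf (p := ENNReal.ofReal p) (q := ENNReal.ofReal q) (r := 1) (hpqr := ⟨by
      rw [hpq.inv_add_inv_ennreal, inv_one]⟩)
    exact h
  have hfgint : Integrable (fun x => f x * g x) μ := memLp_one_iff_integrable.mp hfg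
  have hUsq : Integrable (fun x => U x ^ 2) μ := hU.integrable_sq
  have hVsq : Integrable (fun x => V x ^ 2) μ := hV.integrable_sq
  have ha0 : 0 < a := hf0
  have hb0 : 0 < b := hg0
  -- integrals of squares are 1
  have hUsq_eq : ∀ x, U x ^ 2 = |f x| ^ p / a ^ p := by
    intro x
    rw [hU_def]
    simp only
    rw [div_pow, rpow_sq_eq (abs_nonneg _), rpow_sq_eq ha0.le]
    rw [div_mul_cancel₀ _ (two_ne_zero)]
  have hVsq_eq : ∀ x, V x ^ 2 = |g x| ^ q / b ^ q := by
    intro x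
    rw [hV_def]
    simp only
    rw [div_pow, rpow_sq_eq (abs_nonneg _), rpow_sq_eq hb0.le]
    rw [div_mul_cancel₀ _ (two_ne_zero)]
  have hapne : (a:ℝ) ^ p ≠ 0 := by positivity
  have hbqne : (b:ℝ) ^ q ≠ 0 := by positivity
  have hIU : ∫ x, U x ^ 2 ∂μ = 1 := by
    rw [integral_congr_ae (Filter.Eventually.of_forall hUsq_eq)]
    rw [integral_div, hIf, div_self hapne]
  have hIV : ∫ x, V x ^ 2 ∂μ = 1 := by
    rw [integral_congr_ae (Filter.Eventually.of_forall hVsq_eq)]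
    rw [integral_div, hIg, div_self hbqne]
  set T := ∫ x, U x * V x ∂μ with hT_def
  -- the L² distance squared
  have hD : (eLpNorm (fun x => U x - V x) 2 μ).toReal ^ 2 = ∫ x, (U x - V x) ^ 2 ∂μ := by
    have erfl : eLpNorm (fun x => U x - V x) 2 μ = eLpNorm (U - V) 2 μ := rfl
    rw [erfl, (hU.sub hV).eLpNorm_eq_integral_rpow_norm two_ne_zero ENNReal.ofNat_ne_top]
    have h2 : ((2:ℝ≥0∞)).toReal = (2:ℝ) := by norm_num
    rw [h2]
    simp only [Pi.sub_apply]
    have hnn : 0 ≤ ∫ x, ‖U x - V x‖ ^ (2:ℝ) ∂μ := integral_nonneg fun x => by positivity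
    rw [ENNReal.toReal_ofReal (Real.rpow_nonneg hnn _)]
    have hnn2 : 0 ≤ ∫ x, (U x - V x) ^ 2 ∂μ := integral_nonneg fun x => sq_nonneg _
    have hcongr : ∫ x, ‖U x - V x‖ ^ (2:ℝ) ∂μ = ∫ x, (U x - V x) ^ 2 ∂μ :=
      integral_congr_ae (Filter.Eventually.of_forall fun x => by
        simp [Real.rpow_two, Real.norm_eq_abs, sq_abs])
    rw [hcongr, ← Real.rpow_natCast _ 2, ← Real.rpow_mul hnn2]
    norm_num
  have hDval : (eLpNorm (fun x => U x - V x) 2 μ).toReal ^ 2 = 2 - 2 * T := by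
    rw [hD]
    have : ∀ x, (U x - V x) ^ 2 = U x ^ 2 + V x ^ 2 - 2 * (U x * V x) := fun x => by ring
    have hsum : Integrable (fun x => U x ^ 2 + V x ^ 2) μ := hUsq.add hVsq
    have h2uv : Integrable (fun x => 2 * (U x * V x)) μ := hUVint.const_mul 2
    rw [integral_congr_ae (Filter.Eventually.of_forall this),
      integral_sub hsum h2uv, integral_add hUsq hVsq, integral_const_mul, hIU, hIV, ← hT_def]
    ring
  -- pointwise bridge : U^(2/p) * V^(2/q) = |f x * g x| / (a*b)
  have hUpow : ∀ x, U x ^ (2/p) = |f x| / a := by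
    intro x
    rw [hU_def]
    simp only
    rw [← Real.div_rpow (abs_nonneg _) ha0.le, ← Real.rpow_mul (by positivity)]
    rw [show p/2 * (2/p) = 1 by field_simp, Real.rpow_one]
  have hVpow : ∀ x, V x ^ (2/q) = |g x| / b := by
    intro x
    rw [hV_def]
    simp only
    rw [← Real.div_rpow (abs_nonneg _) hb0.le, ← Real.rpow_mul (by positivity)]
    rw [show q/2 * (2/q) = 1 by field_simp, Real.rpow_one]
  have hbridge : ∀ x, U x ^ (2/p) * V x ^ (2/q) = |f x * g x| / (a * b) := by
    intro x
    rw [hUpow x, hVpow x, abs_mul, div_mul_div_comm]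
  have hU0 : ∀ x, 0 ≤ U x := fun x => by rw [hU_def]; positivity
  have hV0 : ∀ x, 0 ≤ V x := fun x => by rw [hV_def]; positivity
  have hab : 0 < a * b := mul_pos ha0 hb0
  -- integral of |f*g|
  have hIfg : (eLpNorm (fun x => f x * g x) 1 μ).toReal = ∫ x, |f x * g x| ∂μ := by
    rw [hfg.eLpNorm_eq_integral_rpow_norm one_ne_zero ENNReal.one_ne_top]
    simp only [ENNReal.toReal_one, Real.rpow_one, inv_one, Real.norm_eq_abs]
    rw [ENNReal.toReal_ofReal (integral_nonneg fun x => abs_nonneg _)]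
  -- upper bound
  have hup : ∫ x, |f x * g x| ∂μ ≤ a * b * ((1 - 2/p) + (2/p) * T) := by
    have hpt : ∀ x, |f x * g x| ≤ a * b * ((1 - 2/p) * V x ^ 2 + (2/p) * (U x * V x)) := by
      intro x
      have h := young_up hp hpq (hU0 x) (hV0 x)
      rw [hbridge x, div_le_iff₀ hab] at h
      calc |f x * g x| ≤ ((1 - 2/p) * V x ^ 2 + (2/p) * (U x * V x)) * (a*b) := h
        _ = a * b * ((1 - 2/p) * V x ^ 2 + (2/p) * (U x * V x)) := by ring
    have hint : Integrable (fun x => a * b * ((1 - 2/p) * V x ^ 2 + (2/p) * (U x * V x))) μ :=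
      ((hVsq.const_mul _).add (hUVint.const_mul _)).const_mul _
    calc ∫ x, |f x * g x| ∂μ
        ≤ ∫ x, a * b * ((1 - 2/p) * V x ^ 2 + (2/p) * (U x * V x)) ∂μ :=
          integral_mono hfgint.abs hint hpt
      _ = a * b * ((1 - 2/p) * (∫ x, V x ^ 2 ∂μ) + (2/p) * T) := by
          rw [integral_const_mul, integral_add (hVsq.const_mul _) (hUVint.const_mul _),
            integral_const_mul, integral_const_mul]
      _ = a * b * ((1 - 2/p) + (2/p) * T) := by rw [hIV, mul_one]
  -- lower bound
  have hlow : a * b * ((2/p - 1) + (2/q) * T) ≤ ∫ x, |f x * g x| ∂μ := by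
    have hpt : ∀ x, a * b * ((2/p - 1) * U x ^ 2 + (2/q) * (U x * V x)) ≤ |f x * g x| := by
      intro x
      have h := young_low hp hpq (hU0 x) (hV0 x)
      rw [hbridge x, le_div_iff₀ hab] at h
      calc a * b * ((2/p - 1) * U x ^ 2 + (2/q) * (U x * V x))
          = ((2/p - 1) * U x ^ 2 + (2/q) * (U x * V x)) * (a*b) := by ring
        _ ≤ |f x * g x| := h
    have hint : Integrable (fun x => a * b * ((2/p - 1) * U x ^ 2 + (2/q) * (U x * V x))) μ :=
      ((hUsq.const_mul _).add (hUVint.const_mul _)).const_mul _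
    calc a * b * ((2/p - 1) + (2/q) * T)
        = a * b * ((2/p - 1) * (∫ x, U x ^ 2 ∂μ) + (2/q) * T) := by rw [hIU, mul_one]
      _ = ∫ x, a * b * ((2/p - 1) * U x ^ 2 + (2/q) * (U x * V x)) ∂μ := by
          rw [integral_const_mul, integral_add (hUsq.const_mul _) (hUVint.const_mul _),
            integral_const_mul, integral_const_mul]
      _ ≤ ∫ x, |f x * g x| ∂μ := integral_mono hint hfgint.abs hpt
  have hDval' : (eLpNorm (fun x =>
      |f x| ^ (p / 2) / a ^ (p / 2) - |g x| ^ (q / 2) / b ^ (q / 2)) 2 μ).toReal ^ 2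
      = 2 - 2 * T := hDval
  rw [hIfg]
  constructor
  · rw [hDval']
    calc a * b * (1 - 1/q * (2 - 2*T))
        = a * b * ((2/p - 1) + (2/q) * T) := by
          have h2q : 2/q = 2 - 2/p := by
            rw [div_eq_mul_one_div, div_eq_mul_one_div 2 p]; linarith
          rw [h2q]
          have h1q : 1/q = 1 - 1/p := by linarith
          rw [h1q]; ring
      _ ≤ ∫ x, |f x * g x| ∂μ := hlow
  · rw [hDval']
    calc ∫ x, |f x * g x| ∂μ
        ≤ a * b * ((1 - 2/p) + (2/p) * T) := hup
      _ = a * b * (1 - 1/p * (2 - 2*T)) := by ring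
end

section
/- There exist f ∈ L^p[0,1] and g ∈ L^q[0,1] with 1 < p < 2, ‖f‖_p, ‖g‖_q > 0, such that ∫|fg| > ‖f‖_p^{1-p/2}·‖g‖_q^{1-q/2}·∫|f|^{p/2}|g|^{q/2}. Concretely, g ≡ 1 and f = 2·χ_{[0,1/2]} on [0,1] with Lebesgue measure give such an example. -/
open MeasureTheory

theorem stmt_7 :
    ∃ p q : ℝ, 1 < p ∧ p < 2 ∧ q = p / (p - 1) ∧
      ∃ f g : ℝ → ℝ,
        f = (Set.Icc (0 : ℝ) (1 / 2)).indicator (fun _ => (2 : ℝ)) ∧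
        g = (fun _ => (1 : ℝ)) ∧
        (let μ := volume.restrict (Set.Icc (0 : ℝ) 1);
          MemLp f (ENNReal.ofReal p) μ ∧ MemLp g (ENNReal.ofReal q) μ ∧
          0 < (eLpNorm f (ENNReal.ofReal p) μ).toReal ∧
          0 < (eLpNorm g (ENNReal.ofReal q) μ).toReal ∧
          (eLpNorm f (ENNReal.ofReal p) μ).toReal ^ (1 - p / 2) *
            (eLpNorm g (ENNReal.ofReal q) μ).toReal ^ (1 - q / 2) *
            ∫ x, |f x| ^ (p / 2) * |g x| ^ (q / 2) ∂μ <
          ∫ x, |f x * g x| ∂μ) := by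
  refine ⟨3/2, 3, by norm_num, by norm_num, by norm_num,
    (Set.Icc (0 : ℝ) (1 / 2)).indicator (fun _ => (2 : ℝ)), fun _ => (1:ℝ), rfl, rfl, ?_⟩
  intro μ
  have hs : MeasurableSet (Set.Icc (0:ℝ) (1/2)) := measurableSet_Icc
  have hμs : μ (Set.Icc (0:ℝ) (1/2)) = ENNReal.ofReal (1/2) := by
    rw [Measure.restrict_apply hs]
    rw [Set.inter_eq_left.2 (Set.Icc_subset_Icc le_rfl (by norm_num))]
    simp [Real.volume_Icc]
  have hμuniv : μ Set.univ = 1 := by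
    rw [Measure.restrict_apply MeasurableSet.univ, Set.univ_inter]
    simp [Real.volume_Icc]
  haveI : IsFiniteMeasure μ := ⟨by rw [hμuniv]; exact ENNReal.one_lt_top⟩
  have hμ0 : μ ≠ 0 := by
    intro h
    rw [h] at hμuniv; simp at hμuniv
  have hnf : eLpNorm ((Set.Icc (0 : ℝ) (1 / 2)).indicator (fun _ => (2 : ℝ)))
      (ENNReal.ofReal (3/2)) μ = ENNReal.ofReal (2 * (1/2:ℝ) ^ (2/3:ℝ)) := by
    rw [eLpNorm_indicator_const hs (by simp) (by simp), hμs]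
    have h32 : (ENNReal.ofReal (3/2)).toReal = 3/2 := by
      rw [ENNReal.toReal_ofReal]; norm_num
    rw [h32, ENNReal.ofReal_mul (by norm_num),
      ENNReal.ofReal_rpow_of_pos (by norm_num : (0:ℝ) < 1/2)]
    have : ((1:ℝ)/(3/2)) = (2/3:ℝ) := by norm_num
    rw [this]
    congr 1
    simp [ENNReal.ofReal_ofNat, Real.enorm_eq_ofReal_abs]
  have hng : eLpNorm (fun _ => (1:ℝ)) (ENNReal.ofReal 3) μ = 1 := by
    rw [eLpNorm_const _ (by simp) hμ0, hμuniv]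
    simp
  have hnf' : (eLpNorm ((Set.Icc (0 : ℝ) (1 / 2)).indicator (fun _ => (2 : ℝ)))
      (ENNReal.ofReal (3/2)) μ).toReal = 2 * (1/2:ℝ) ^ (2/3:ℝ) := by
    rw [hnf, ENNReal.toReal_ofReal]
    positivity
  refine ⟨?_, ?_, ?_, ?_, ?_⟩
  · exact memLp_indicator_const _ hs 2 (Or.inr (by rw [hμs]; exact ENNReal.ofReal_ne_top))
  · exact memLp_const 1
  · rw [hnf']; positivity
  · rw [hng]; norm_num
  · rw [hnf', hng]
    have hint1 : ∫ x, |(Set.Icc (0 : ℝ) (1 / 2)).indicator (fun _ => (2 : ℝ)) x * 1| ∂μ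
        = 1 := by
      have h : (fun x => |(Set.Icc (0 : ℝ) (1 / 2)).indicator (fun _ => (2 : ℝ)) x * 1|)
          = (Set.Icc (0 : ℝ) (1 / 2)).indicator (fun _ => (2 : ℝ)) := by
        funext x
        by_cases hx : x ∈ Set.Icc (0:ℝ) (1/2)
        · rw [Set.indicator_of_mem hx]; norm_num
        · rw [Set.indicator_of_notMem hx]; norm_num
      rw [h, integral_indicator_const _ hs, measureReal_def, hμs]
      rw [ENNReal.toReal_ofReal (by norm_num)]
      norm_num
    have hint2 : ∫ x, |(Set.Icc (0 : ℝ) (1 / 2)).indicator (fun _ => (2 : ℝ)) x| ^ ((3/2:ℝ) / 2)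
        * |(1:ℝ)| ^ ((3:ℝ)/2) ∂μ = (1/2) * (2:ℝ) ^ (3/4:ℝ) := by
      have h : (fun x => |(Set.Icc (0 : ℝ) (1 / 2)).indicator (fun _ => (2 : ℝ)) x| ^ ((3/2:ℝ) / 2)
          * |(1:ℝ)| ^ ((3:ℝ)/2))
          = (Set.Icc (0 : ℝ) (1 / 2)).indicator (fun _ => (2:ℝ) ^ (3/4:ℝ)) := by
        funext x
        by_cases hx : x ∈ Set.Icc (0:ℝ) (1/2)
        · rw [Set.indicator_of_mem hx, Set.indicator_of_mem hx]
          rw [abs_one, Real.one_rpow, mul_one, abs_of_nonneg (by norm_num : (0:ℝ) ≤ 2)]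
          norm_num
        · rw [Set.indicator_of_notMem hx, Set.indicator_of_notMem hx]
          rw [abs_zero, Real.zero_rpow (by norm_num : ((3:ℝ)/2)/2 ≠ 0)]
          simp
      rw [h, integral_indicator_const _ hs, measureReal_def, hμs]
      rw [ENNReal.toReal_ofReal (by norm_num)]
      rw [smul_eq_mul]
    rw [hint1, hint2]
    have e2 : ((1:ℝ)/2) = (2:ℝ)^(-1:ℝ) := by
      rw [Real.rpow_neg_one]; norm_num
    have e1 : (2:ℝ) * (1/2:ℝ) ^ (2/3:ℝ) = (2:ℝ) ^ (1/3:ℝ) := by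
      rw [e2, ← Real.rpow_mul (by norm_num : (0:ℝ) ≤ 2)]
      nth_rewrite 1 [← Real.rpow_one (2:ℝ)]
      rw [← Real.rpow_add (by norm_num : (0:ℝ) < 2)]
      norm_num
    rw [e1, ← Real.rpow_mul (by norm_num : (0:ℝ) ≤ 2), ENNReal.toReal_one, Real.one_rpow,
      mul_one, e2, ← Real.rpow_add (by norm_num : (0:ℝ) < 2),
      ← Real.rpow_add (by norm_num : (0:ℝ) < 2)]
    have : ((1:ℝ)/3 * (1 - 3/2/2) + (-1 + 3/4)) = -(1/6) := by norm_num
    rw [this]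
    calc (2:ℝ) ^ (-(1/6):ℝ) < 1 :=
      Real.rpow_lt_one_of_one_lt_of_neg (by norm_num) (by norm_num)
end

section
/- Let (X, μ) be a probability space, 0 < r < s < ∞ with s ≤ 2r, and f ∈ L^s with ‖f‖_s > 0. Then ‖f‖_r ≤ ‖f‖_s·[1 - (2(s-r)/s)·(1 - ‖|f|^{s/2}‖_1/‖|f|^{s/2}‖_2)]^{1/r}. -/
open MeasureTheory

/-- Pure real-number core of the argument: interpolation + Bernoulli. -/
lemma stmt_8_real_key (r s Ir Ih Is : ℝ) (hr : 0 < r) (hrs : r < s) (hs : s ≤ 2 * r)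
    (hIr : 0 ≤ Ir) (hIh : 0 ≤ Ih) (hIs : 0 < Is)
    (hHolder : Ir ≤ Ih ^ (2 * (s - r) / s) * Is ^ ((2 * r - s) / s)) :
    Ir ^ (1 / r) ≤ Is ^ (1 / s) *
      (1 - (2 * (s - r) / s) * (1 - Ih / Is ^ ((1 : ℝ) / 2))) ^ (1 / r) := by
  have hs0 : 0 < s := hr.trans hrs
  set α : ℝ := 2 * (s - r) / s with hα_def
  set t : ℝ := Ih / Is ^ ((1 : ℝ) / 2) with ht_def
  have hα0 : 0 < α := by apply div_pos <;> linarith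
  have hα1 : α ≤ 1 := by rw [div_le_one hs0]; linarith
  have ht0 : 0 ≤ t := by
    apply div_nonneg hIh (Real.rpow_nonneg hIs.le _)
  have hbern : t ^ α ≤ 1 - α * (1 - t) := by
    have h := rpow_one_add_le_one_add_mul_self (s := t - 1) (by linarith) hα0.le hα1
    have h1 : 1 + (t - 1) = t := by ring
    rw [h1] at h
    linarith
  have h2 : (Is ^ ((1 : ℝ) / 2)) ^ α = Is ^ (α / 2) := by
    rw [← Real.rpow_mul hIs.le]; ring_nf
  have e1 : (2 * r - s) / s = r / s - α / 2 := by
    rw [hα_def]; field_simp; ring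
  have hfac : Ih ^ α * Is ^ ((2 * r - s) / s) = Is ^ (r / s) * t ^ α := by
    rw [e1, Real.rpow_sub hIs, ht_def,
      Real.div_rpow hIh (Real.rpow_nonneg hIs.le _), h2]
    ring
  have key : Ir ≤ Is ^ (r / s) * (1 - α * (1 - t)) := by
    calc Ir ≤ Ih ^ α * Is ^ ((2 * r - s) / s) := hHolder
    _ = Is ^ (r / s) * t ^ α := hfac
    _ ≤ Is ^ (r / s) * (1 - α * (1 - t)) :=
        mul_le_mul_of_nonneg_left hbern (Real.rpow_nonneg hIs.le _)
  have hP : 0 < Is ^ (r / s) := Real.rpow_pos_of_pos hIs _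
  have hK0 : 0 ≤ 1 - α * (1 - t) := by nlinarith [key, hIr, hP]
  calc Ir ^ (1 / r) ≤ (Is ^ (r / s) * (1 - α * (1 - t))) ^ (1 / r) :=
        Real.rpow_le_rpow hIr key (by positivity)
  _ = Is ^ (1 / s) * (1 - α * (1 - t)) ^ (1 / r) := by
      rw [Real.mul_rpow hP.le hK0, ← Real.rpow_mul hIs.le,
        show r / s * (1 / r) = 1 / s by field_simp]

theorem stmt_8 {X : Type*} [MeasurableSpace X] (μ : Measure X)
    [IsProbabilityMeasure μ] (r s : ℝ) (hr : 0 < r) (hrs : r < s) (hs : s ≤ 2 * r)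
    (f : X → ℝ) (hf : MemLp f (ENNReal.ofReal s) μ)
    (hf0 : 0 < (eLpNorm f (ENNReal.ofReal s) μ).toReal) :
    (eLpNorm f (ENNReal.ofReal r) μ).toReal ≤
      (eLpNorm f (ENNReal.ofReal s) μ).toReal *
        (1 - (2 * (s - r) / s) *
          (1 - (eLpNorm (fun x => |f x| ^ (s / 2)) 1 μ).toReal /
                (eLpNorm (fun x => |f x| ^ (s / 2)) 2 μ).toReal)) ^ (1 / r) := by
  have hs0 : 0 < s := hr.trans hrs
  -- helper: Memℒp of powers of |f|
  have haux : ∀ a : ℝ, 0 < a → ∀ b : ℝ, b ≤ s / a →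
      MemLp (fun x => |f x| ^ a) (ENNReal.ofReal b) μ := by
    intro a ha b hba
    have h1 := hf.norm_rpow_div (ENNReal.ofReal a)
    rw [ENNReal.toReal_ofReal ha.le, ← ENNReal.ofReal_div_of_pos ha] at h1
    simp only [Real.norm_eq_abs] at h1
    exact h1.mono_exponent (ENNReal.ofReal_le_ofReal hba)
  set Ir : ℝ := ∫ x, |f x| ^ r ∂μ with hIr_def
  set Ih : ℝ := ∫ x, |f x| ^ (s / 2) ∂μ with hIh_def
  set Is : ℝ := ∫ x, |f x| ^ s ∂μ with hIs_def
  have hIr_nonneg : 0 ≤ Ir := integral_nonneg fun x => by positivity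
  have hIh_nonneg : 0 ≤ Ih := integral_nonneg fun x => by positivity
  have hIs_nonneg : 0 ≤ Is := integral_nonneg fun x => by positivity
  -- MemLp facts
  have hfr : MemLp f (ENNReal.ofReal r) μ :=
    hf.mono_exponent (ENNReal.ofReal_le_ofReal hrs.le)
  have hg2 : MemLp (fun x => |f x| ^ (s / 2)) 2 μ := by
    have h := haux (s / 2) (by positivity) 2 (le_of_eq (by field_simp))
    rwa [show ENNReal.ofReal 2 = 2 by norm_num] at h
  have hg1 : MemLp (fun x => |f x| ^ (s / 2)) 1 μ :=
    hg2.mono_exponent one_le_two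
  -- norm identifications
  have hNs : (eLpNorm f (ENNReal.ofReal s) μ).toReal = Is ^ (1 / s) := by
    rw [hf.eLpNorm_eq_integral_rpow_norm (ENNReal.ofReal_pos.mpr hs0).ne'
      ENNReal.ofReal_ne_top]
    rw [ENNReal.toReal_ofReal hs0.le]
    simp only [Real.norm_eq_abs]
    rw [ENNReal.toReal_ofReal (by positivity), one_div]
  have hNr : (eLpNorm f (ENNReal.ofReal r) μ).toReal = Ir ^ (1 / r) := by
    rw [hfr.eLpNorm_eq_integral_rpow_norm (ENNReal.ofReal_pos.mpr hr).ne'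
      ENNReal.ofReal_ne_top]
    rw [ENNReal.toReal_ofReal hr.le]
    simp only [Real.norm_eq_abs]
    rw [ENNReal.toReal_ofReal (by positivity), one_div]
  have habs : ∀ x, ‖|f x| ^ (s / 2)‖ = |f x| ^ (s / 2) := fun x =>
    Real.norm_of_nonneg (by positivity)
  have hN1 : (eLpNorm (fun x => |f x| ^ (s / 2)) 1 μ).toReal = Ih := by
    rw [hg1.eLpNorm_eq_integral_rpow_norm one_ne_zero ENNReal.one_ne_top]
    simp only [ENNReal.toReal_one, Real.rpow_one, inv_one, habs]
    rw [ENNReal.toReal_ofReal hIh_nonneg]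
  have hN2 : (eLpNorm (fun x => |f x| ^ (s / 2)) 2 μ).toReal = Is ^ ((1:ℝ) / 2) := by
    rw [hg2.eLpNorm_eq_integral_rpow_norm two_ne_zero ENNReal.ofNat_ne_top]
    simp only [ENNReal.toReal_ofNat, habs]
    have hint : ∫ x, (|f x| ^ (s / 2)) ^ (2:ℝ) ∂μ = Is := by
      apply integral_congr_ae
      filter_upwards with x
      rw [← Real.rpow_mul (abs_nonneg _)]
      norm_num
    rw [hint, ENNReal.toReal_ofReal (by positivity), one_div]
  -- positivity of Is
  have hIs0 : 0 < Is := by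
    rcases hIs_nonneg.lt_or_eq with h | h
    · exact h
    · exfalso
      rw [hNs, ← h, Real.zero_rpow (by positivity)] at hf0
      exact lt_irrefl 0 hf0
  -- Hölder / interpolation
  have hHolder : Ir ≤ Ih ^ (2 * (s - r) / s) * Is ^ ((2 * r - s) / s) := by
    rcases eq_or_lt_of_le hs with hseq | hslt
    · -- s = 2r
      have hα : 2 * (s - r) / s = 1 := by rw [hseq]; field_simp; ring
      have hlam : (2 * r - s) / s = 0 := by rw [hseq]; simp
      have hII : Ir = Ih := by
        rw [hIr_def, hIh_def]
        apply integral_congr_ae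
        filter_upwards with x
        rw [hseq]; ring_nf
      rw [hα, hlam, Real.rpow_one, Real.rpow_zero, mul_one, hII]
    · -- s < 2r
      have hpq : Real.HolderConjugate (s / (2 * (s - r))) (s / (2 * r - s)) := by
        rw [Real.holderConjugate_iff]
        constructor
        · rw [lt_div_iff₀ (by linarith)]; linarith
        · rw [inv_div, inv_div]; field_simp; ring
      have hF : MemLp (fun x => |f x| ^ (s - r)) (ENNReal.ofReal (s / (2 * (s - r)))) μ := by
        apply haux (s - r) (by linarith)
        rw [div_le_div_iff₀ (by linarith) (by linarith)]
        nlinarith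
      have hG : MemLp (fun x => |f x| ^ (2 * r - s)) (ENNReal.ofReal (s / (2 * r - s))) μ :=
        haux (2 * r - s) (by linarith) _ le_rfl
      have H := integral_mul_le_Lp_mul_Lq_of_nonneg hpq
        (Filter.Eventually.of_forall fun x => by positivity)
        (Filter.Eventually.of_forall fun x => by positivity) hF hG
      have hFG : ∫ x, |f x| ^ (s - r) * |f x| ^ (2 * r - s) ∂μ = Ir := by
        apply integral_congr_ae
        filter_upwards with x
        rw [← Real.rpow_add' (abs_nonneg _) (by rw [show s - r + (2 * r - s) = r by ring]; exact hr.ne')]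
        rw [show s - r + (2 * r - s) = r by ring]
      have hFp : ∫ x, (|f x| ^ (s - r)) ^ (s / (2 * (s - r))) ∂μ = Ih := by
        apply integral_congr_ae
        filter_upwards with x
        rw [← Real.rpow_mul (abs_nonneg _)]
        congr 1
        field_simp [sub_ne_zero.mpr hrs.ne']
      have hGq : ∫ x, (|f x| ^ (2 * r - s)) ^ (s / (2 * r - s)) ∂μ = Is := by
        apply integral_congr_ae
        filter_upwards with x
        rw [← Real.rpow_mul (abs_nonneg _)]
        congr 1
        field_simp [sub_ne_zero.mpr hslt.ne']
      rw [hFG, hFp, hGq, one_div_div, one_div_div] at H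
      exact H
  rw [hNr, hNs, hN1, hN2]
  exact stmt_8_real_key r s Ir Ih Is hr hrs hs hIr_nonneg hIh_nonneg hIs0 hHolder
end

section
/- Let (X, μ) be a probability space, 0 < r < s < ∞ with s ≤ 2r, and f ∈ L^s with ‖f‖_s > 0. Then ‖f‖_s·[max(0, 1 - (2r/s)·(1 - ‖|f|^{s/2}‖_1/‖|f|^{s/2}‖_2))]^{1/r} ≤ ‖f‖_r. -/
open MeasureTheory
open scoped ENNReal

theorem stmt_9 {X : Type*} [MeasurableSpace X] (μ : Measure X)
    [IsProbabilityMeasure μ] (r s : ℝ) (hr : 0 < r) (hrs : r < s) (hs : s ≤ 2 * r)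
    (f : X → ℝ) (hf : MemLp f (ENNReal.ofReal s) μ)
    (hf0 : 0 < (eLpNorm f (ENNReal.ofReal s) μ).toReal) :
    (eLpNorm f (ENNReal.ofReal s) μ).toReal *
      (max 0 (1 - (2 * r / s) *
        (1 - (eLpNorm (fun x => |f x| ^ (s / 2)) 1 μ).toReal /
              (eLpNorm (fun x => |f x| ^ (s / 2)) 2 μ).toReal))) ^ (1 / r) ≤
    (eLpNorm f (ENNReal.ofReal r) μ).toReal := by
  have hs0 : 0 < s := hr.trans hrs
  have hs2 : 0 < s / 2 := by linarith
  set A' := eLpNorm f (ENNReal.ofReal s) μ with hA'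
  set B' := eLpNorm f (ENNReal.ofReal r) μ with hB'
  have hA'ne : A' ≠ ⊤ := hf.2.ne
  have hfr : MemLp f (ENNReal.ofReal r) μ :=
    hf.mono_exponent (ENNReal.ofReal_le_ofReal hrs.le)
  have hB'ne : B' ≠ ⊤ := hfr.2.ne
  set A := A'.toReal with hA
  set B := B'.toReal with hB
  have hApos : 0 < A := hf0
  have hBnn : 0 ≤ B := ENNReal.toReal_nonneg
  -- g = |f|^{s/2} rewritten with norms
  have hgeq : (fun x => |f x| ^ (s / 2)) = fun x => ‖f x‖ ^ (s / 2) := by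
    funext x; rw [Real.norm_eq_abs]
  -- eLpNorm of g at exponent p
  have hrpow : ∀ p : ENNReal, eLpNorm (fun x => |f x| ^ (s / 2)) p μ
      = eLpNorm f (p * ENNReal.ofReal (s / 2)) μ ^ (s / 2) := by
    intro p
    rw [hgeq]
    exact eLpNorm_norm_rpow f hs2
  have h2 : (2 : ℝ≥0∞) * ENNReal.ofReal (s / 2) = ENNReal.ofReal s := by
    rw [show (2 : ℝ≥0∞) = ENNReal.ofReal 2 by simp, ← ENNReal.ofReal_mul (by norm_num)]
    congr 1; ring
  have hG2 : eLpNorm (fun x => |f x| ^ (s / 2)) 2 μ = A' ^ (s / 2) := by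
    rw [hrpow 2, h2]
  set t : ℝ := 2 * r / s with ht
  have ht1 : 1 ≤ t := by
    rw [ht, le_div_iff₀ hs0]; linarith
  have htr : ENNReal.ofReal t * ENNReal.ofReal (s / 2) = ENNReal.ofReal r := by
    rw [← ENNReal.ofReal_mul (by positivity)]
    congr 1
    rw [ht]
    field_simp
  have hGt : eLpNorm (fun x => |f x| ^ (s / 2)) (ENNReal.ofReal t) μ = B' ^ (s / 2) := by
    rw [hrpow _, htr]
  -- measurability of g
  have hgm : AEStronglyMeasurable (fun x => |f x| ^ (s / 2)) μ := by
    rw [hgeq]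
    exact (Real.continuous_rpow_const hs2.le).comp_aestronglyMeasurable hf.1.norm
  -- ‖g‖₁ ≤ ‖g‖_t = B'^{s/2}
  have hG1le : (eLpNorm (fun x => |f x| ^ (s / 2)) 1 μ).toReal ≤ B ^ (s / 2) := by
    have h1t : (1 : ℝ≥0∞) ≤ ENNReal.ofReal t := by
      rw [show (1 : ℝ≥0∞) = ENNReal.ofReal 1 by simp]
      exact ENNReal.ofReal_le_ofReal ht1
    have hle : eLpNorm (fun x => |f x| ^ (s / 2)) 1 μ ≤ B' ^ (s / 2) :=
      hGt ▸ eLpNorm_le_eLpNorm_of_exponent_le h1t hgm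
    have hfin : B' ^ (s / 2) ≠ ⊤ := ENNReal.rpow_ne_top_of_nonneg hs2.le hB'ne
    calc (eLpNorm (fun x => |f x| ^ (s / 2)) 1 μ).toReal
        ≤ (B' ^ (s / 2)).toReal := ENNReal.toReal_mono hfin hle
      _ = B ^ (s / 2) := (ENNReal.toReal_rpow B' (s / 2)).symm
  have hG2eq : (eLpNorm (fun x => |f x| ^ (s / 2)) 2 μ).toReal = A ^ (s / 2) := by
    rw [hG2, ← ENNReal.toReal_rpow]
  -- B ≤ A
  have hBA : B ≤ A := by
    refine ENNReal.toReal_mono hA'ne ?_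
    exact eLpNorm_le_eLpNorm_of_exponent_le (ENNReal.ofReal_le_ofReal hrs.le) hf.1
  set b : ℝ := B / A with hb
  have hbnn : 0 ≤ b := div_nonneg hBnn hApos.le
  have hb1 : b ≤ 1 := (div_le_one hApos).mpr hBA
  set c : ℝ := b ^ (s / 2) with hc
  have hcnn : 0 ≤ c := Real.rpow_nonneg hbnn _
  -- a ≤ c
  have hac : (eLpNorm (fun x => |f x| ^ (s / 2)) 1 μ).toReal /
      (eLpNorm (fun x => |f x| ^ (s / 2)) 2 μ).toReal ≤ c := by
    rw [hG2eq, hc, hb, Real.div_rpow hBnn hApos.le]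
    gcongr
  -- Bernoulli : 1 - t(1-c) ≤ c^t
  have hbern : 1 - t * (1 - c) ≤ c ^ t := by
    have h := one_add_mul_self_le_rpow_one_add (s := c - 1) (by linarith) ht1
    have : 1 + t * (c - 1) ≤ c ^ t := by
      convert h using 2; ring
    linarith
  -- main chain
  have hmax : max 0 (1 - t *
      (1 - (eLpNorm (fun x => |f x| ^ (s / 2)) 1 μ).toReal /
        (eLpNorm (fun x => |f x| ^ (s / 2)) 2 μ).toReal)) ≤ c ^ t := by
    refine max_le (Real.rpow_nonneg hcnn _) ?_
    refine le_trans ?_ hbern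
    have : 1 - (eLpNorm (fun x => |f x| ^ (s / 2)) 1 μ).toReal /
        (eLpNorm (fun x => |f x| ^ (s / 2)) 2 μ).toReal ≥ 1 - c := by linarith
    nlinarith [ht1]
  have hmaxnn : 0 ≤ max 0 (1 - t *
      (1 - (eLpNorm (fun x => |f x| ^ (s / 2)) 1 μ).toReal /
        (eLpNorm (fun x => |f x| ^ (s / 2)) 2 μ).toReal)) := le_max_left _ _
  have hkey : (max 0 (1 - t *
      (1 - (eLpNorm (fun x => |f x| ^ (s / 2)) 1 μ).toReal /
        (eLpNorm (fun x => |f x| ^ (s / 2)) 2 μ).toReal))) ^ (1 / r) ≤ b := by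
    calc (max 0 _) ^ (1 / r) ≤ (c ^ t) ^ (1 / r) :=
          Real.rpow_le_rpow hmaxnn hmax (by positivity)
      _ = c ^ (t * (1 / r)) := by rw [← Real.rpow_mul hcnn]
      _ = b ^ ((s / 2) * (t * (1 / r))) := by rw [hc, ← Real.rpow_mul hbnn]
      _ = b ^ (1 : ℝ) := by
          congr 1
          rw [ht]
          field_simp
      _ = b := Real.rpow_one b
  calc A * (max 0 (1 - t *
      (1 - (eLpNorm (fun x => |f x| ^ (s / 2)) 1 μ).toReal /
        (eLpNorm (fun x => |f x| ^ (s / 2)) 2 μ).toReal))) ^ (1 / r)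
      ≤ A * b := by
        exact mul_le_mul_of_nonneg_left hkey hApos.le
    _ = B := by rw [hb]; field_simp
end

section
/- Let (X, μ) be a probability space, 0 < r < s < ∞ with s ≤ 2r, and f ∈ L^s with 0 < ‖f‖_s < ∞. Let V := Var(|f|^{s/2}/‖|f|^{s/2}‖_2) = 1 - (‖|f|^{s/2}‖_1/‖|f|^{s/2}‖_2)². Then ‖f‖_s·[max(0, 1 - (2r/s)·V)]^{1/r} ≤ ‖f‖_r ≤ ‖f‖_s·[1 - ((s-r)/s)·V]^{1/r}. -/
open MeasureTheory
open scoped ENNReal NNReal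

private lemma hoelder_rpow_aux {X : Type*} [MeasurableSpace X] (μ : Measure X)
    {G : X → ℝ≥0∞} (hG : AEMeasurable G μ) {α β p q : ℝ}
    (hα : 0 ≤ α) (hβ : 0 ≤ β) (hpq : Real.HolderConjugate p q) :
    ∫⁻ x, G x ^ (α + β) ∂μ ≤
      (∫⁻ x, G x ^ (α * p) ∂μ) ^ (1 / p) * (∫⁻ x, G x ^ (β * q) ∂μ) ^ (1 / q) := by
  have h := ENNReal.lintegral_mul_le_Lp_mul_Lq μ hpq (hG.pow_const α) (hG.pow_const β)
  have e1 : (∫⁻ x, ((fun x => G x ^ α) * fun x => G x ^ β) x ∂μ)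
      = ∫⁻ x, G x ^ (α + β) ∂μ := by
    refine lintegral_congr fun x => ?_
    simp [Pi.mul_apply, ENNReal.rpow_add_of_nonneg _ _ hα hβ]
  rw [e1] at h
  simp_rw [← ENNReal.rpow_mul] at h
  exact h

theorem stmt_10 {X : Type*} [MeasurableSpace X] (μ : Measure X)
    [IsProbabilityMeasure μ] (r s : ℝ) (hr : 0 < r) (hrs : r < s) (hs : s ≤ 2 * r)
    (f : X → ℝ) (hf : MemLp f (ENNReal.ofReal s) μ)
    (hf0 : 0 < (eLpNorm f (ENNReal.ofReal s) μ).toReal)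
    (V : ℝ)
    (hV : V = 1 - ((eLpNorm (fun x => |f x| ^ (s / 2)) 1 μ).toReal /
                   (eLpNorm (fun x => |f x| ^ (s / 2)) 2 μ).toReal) ^ 2) :
    (eLpNorm f (ENNReal.ofReal s) μ).toReal *
        (max 0 (1 - (2 * r / s) * V)) ^ (1 / r) ≤
      (eLpNorm f (ENNReal.ofReal r) μ).toReal ∧
    (eLpNorm f (ENNReal.ofReal r) μ).toReal ≤
      (eLpNorm f (ENNReal.ofReal s) μ).toReal *
        (1 - ((s - r) / s) * V) ^ (1 / r) := by
  have hs0 : (0:ℝ) < s := hr.trans hrs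
  set G : X → ℝ≥0∞ := fun x => (‖f x‖₊ : ℝ≥0∞) with hGdef
  have hG : AEMeasurable G μ := hf.1.enorm
  set LA := ∫⁻ x, G x ^ r ∂μ with hLA
  set LB := ∫⁻ x, G x ^ (s/2) ∂μ with hLB
  set LC := ∫⁻ x, G x ^ s ∂μ with hLC
  -- eLpNorm expressions
  have hes : eLpNorm f (ENNReal.ofReal s) μ = LC ^ (1/s) := by
    rw [eLpNorm_eq_lintegral_rpow_enorm_toReal (ENNReal.ofReal_pos.2 hs0).ne' ENNReal.ofReal_ne_top,
      ENNReal.toReal_ofReal hs0.le]; rfl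
  have her : eLpNorm f (ENNReal.ofReal r) μ = LA ^ (1/r) := by
    rw [eLpNorm_eq_lintegral_rpow_enorm_toReal (ENNReal.ofReal_pos.2 hr).ne' ENNReal.ofReal_ne_top,
      ENNReal.toReal_ofReal hr.le]; rfl
  -- finiteness and nonvanishing of LC
  have hLCne : LC ≠ ∞ := by
    have h1 : LC ^ (1/s) ≠ ∞ := by rw [← hes]; exact hf.2.ne
    have h2 : LC = (LC ^ (1/s)) ^ s := by
      rw [← ENNReal.rpow_mul, one_div, inv_mul_cancel₀ hs0.ne', ENNReal.rpow_one]
    rw [h2]; exact (ENNReal.rpow_lt_top_of_nonneg hs0.le h1).ne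
  have hLC0 : LC ≠ 0 := by
    intro h0
    rw [hes, h0, ENNReal.zero_rpow_of_pos (by positivity)] at hf0
    simp at hf0
  -- Cauchy-Schwarz : LB ≤ LC ^ (1/2)
  have hconj22 : Real.HolderConjugate 2 2 := Real.holderConjugate_iff.mpr ⟨one_lt_two, by norm_num⟩
  have hCS : LB ≤ LC ^ (1/2 : ℝ) := by
    have h := hoelder_rpow_aux μ hG (by positivity : (0:ℝ) ≤ s/2) le_rfl hconj22
    simpa [ENNReal.rpow_zero, lintegral_one, measure_univ, ENNReal.one_rpow,
      div_mul_cancel₀ s (two_ne_zero (α := ℝ))] using h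
  have hLBne : LB ≠ ∞ :=
    (lt_of_le_of_lt hCS (ENNReal.rpow_lt_top_of_nonneg (by norm_num) hLCne)).ne
  -- the two main Hölder estimates (with the degenerate case s = 2r handled separately)
  have hE1 : LB ≤ LA ^ (s/(2*r)) := by
    rcases eq_or_lt_of_le hs with heq | hlt
    · have hALB : LA = LB := by rw [hLA, hLB]; congr 1; funext x; rw [show r = s/2 by linarith]
      rw [show s/(2*r) = 1 by rw [heq]; field_simp, ENNReal.rpow_one, hALB]
    · have hconj : Real.HolderConjugate (2*r/s) (2*r/(2*r-s)) := by
        refine Real.holderConjugate_iff.mpr ⟨?_, ?_⟩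
        · rw [lt_div_iff₀ hs0]; linarith
        · rw [inv_div, inv_div]; field_simp; ring
      have h := hoelder_rpow_aux μ hG (by positivity : (0:ℝ) ≤ s/2) le_rfl hconj
      have e1 : s/2 * (2*r/s) = r := by field_simp
      have e2 : s/2 + 0 = s/2 := by ring
      rw [e1, e2] at h
      have e3 : 1/(2*r/s) = s/(2*r) := by rw [one_div_div]
      rw [e3] at h
      simpa [ENNReal.rpow_zero, lintegral_one, measure_univ, ENNReal.one_rpow] using h
  have hE2 : LA ≤ LB ^ (2*(s-r)/s) * LC ^ ((2*r-s)/s) := by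
    rcases eq_or_lt_of_le hs with heq | hlt
    · have hALB : LA = LB := by rw [hLA, hLB]; congr 1; funext x; rw [show r = s/2 by linarith]
      rw [show 2*(s-r)/s = 1 by rw [heq]; field_simp; ring,
        show (2*r-s)/s = 0 by rw [heq]; simp,
        ENNReal.rpow_one, ENNReal.rpow_zero, mul_one, hALB]
    · have hconj : Real.HolderConjugate (s/(2*(s-r))) (s/(2*r-s)) := by
        refine Real.holderConjugate_iff.mpr ⟨?_, ?_⟩
        · rw [lt_div_iff₀ (by linarith : (0:ℝ) < 2*(s-r))]; linarith
        · rw [inv_div, inv_div]; field_simp; ring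
      have h := hoelder_rpow_aux μ hG (by linarith : (0:ℝ) ≤ s - r)
        (by linarith : (0:ℝ) ≤ 2*r - s) hconj
      have hsr0 : s - r ≠ 0 := sub_ne_zero.2 (ne_of_gt hrs)
      have h2rs0 : 2*r - s ≠ 0 := by intro h0; rw [sub_eq_zero] at h0; exact hlt.ne h0.symm
      have e0 : s - r + (2*r - s) = r := by ring
      have e1 : (s-r) * (s/(2*(s-r))) = s/2 := by
        rw [← div_div, mul_comm, div_mul_cancel₀ _ hsr0]
      have e2 : (2*r-s) * (s/(2*r-s)) = s := by
        rw [mul_comm, div_mul_cancel₀ _ h2rs0]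
      have e3 : 1/(s/(2*(s-r))) = 2*(s-r)/s := by rw [one_div_div]
      have e4 : 1/(s/(2*r-s)) = (2*r-s)/s := by rw [one_div_div]
      rw [e0, e1, e2, e3, e4] at h
      exact h
  have hLAne : LA ≠ ∞ := by
    refine (lt_of_le_of_lt hE2 ?_).ne
    exact ENNReal.mul_lt_top
      (ENNReal.rpow_lt_top_of_nonneg (div_nonneg (by linarith) hs0.le) hLBne)
      (ENNReal.rpow_lt_top_of_nonneg (div_nonneg (by linarith) hs0.le) hLCne)
  -- pass to real numbers
  set a := LA.toReal with hadef
  set b := LB.toReal with hbdef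
  set c := LC.toReal with hcdef
  have ha0 : 0 ≤ a := ENNReal.toReal_nonneg
  have hb0 : 0 ≤ b := ENNReal.toReal_nonneg
  have hc0 : 0 < c := ENNReal.toReal_pos hLC0 hLCne
  have hba : b ≤ a ^ (s/(2*r)) := by
    rw [ENNReal.toReal_rpow]
    exact ENNReal.toReal_mono (ENNReal.rpow_lt_top_of_nonneg (by positivity) hLAne).ne hE1
  have hbc : b ≤ c ^ (1/2:ℝ) := by
    rw [ENNReal.toReal_rpow]
    exact ENNReal.toReal_mono (ENNReal.rpow_lt_top_of_nonneg (by norm_num) hLCne).ne hCS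
  have hab : a ≤ b ^ (2*(s-r)/s) * c ^ ((2*r-s)/s) := by
    rw [ENNReal.toReal_rpow, ENNReal.toReal_rpow, ← ENNReal.toReal_mul]
    refine ENNReal.toReal_mono ?_ hE2
    exact (ENNReal.mul_lt_top
      (ENNReal.rpow_lt_top_of_nonneg (div_nonneg (by linarith) hs0.le) hLBne)
      (ENNReal.rpow_lt_top_of_nonneg (div_nonneg (by linarith) hs0.le) hLCne)).ne
  -- identify V
  have hB1 : eLpNorm (fun x => |f x| ^ (s/2)) 1 μ = LB := by
    rw [eLpNorm_one_eq_lintegral_enorm]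
    refine lintegral_congr fun x => ?_
    rw [Real.enorm_eq_ofReal (by positivity),
      ← ENNReal.ofReal_rpow_of_nonneg (abs_nonneg _) (by positivity)]
    simp only [hGdef]
    rw [← Real.enorm_eq_ofReal_abs]; rfl
  have hB2 : eLpNorm (fun x => |f x| ^ (s/2)) 2 μ = LC ^ (1/2:ℝ) := by
    rw [eLpNorm_eq_lintegral_rpow_enorm_toReal two_ne_zero ENNReal.ofNat_ne_top]
    norm_num
    congr 1
    refine lintegral_congr fun x => ?_
    rw [Real.enorm_eq_ofReal (by positivity),
      ← ENNReal.ofReal_rpow_of_nonneg (abs_nonneg _) (by positivity),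
      ← ENNReal.rpow_two, ← ENNReal.rpow_mul, div_mul_cancel₀ s (two_ne_zero (α := ℝ))]
    simp only [hGdef]
    rw [← Real.enorm_eq_ofReal_abs]; rfl
  have hchalf : (LC ^ (1/2:ℝ)).toReal = c ^ (1/2:ℝ) := (ENNReal.toReal_rpow _ _).symm
  have hVval : V = 1 - b^2 / c := by
    rw [hV, hB1, hB2, hchalf]
    rw [div_pow, ← Real.rpow_natCast (c ^ (1/2:ℝ)) 2, ← Real.rpow_mul hc0.le]
    norm_num
    rfl
  have hb2c : b^2 ≤ c := by
    have h := pow_le_pow_left₀ hb0 hbc 2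
    rwa [← Real.rpow_natCast (c ^ (1/2:ℝ)) 2, ← Real.rpow_mul hc0.le,
      (by norm_num : (1/2:ℝ) * (2:ℕ) = 1), Real.rpow_one] at h
  have hV0 : 0 ≤ V := by
    have : b^2/c ≤ 1 := (div_le_one hc0).2 hb2c
    rw [hVval]; linarith
  have hV1 : V ≤ 1 := by
    have : 0 ≤ b^2/c := by positivity
    rw [hVval]; linarith
  have hb2 : b^2 = c * (1-V) := by
    rw [hVval]; field_simp; ring
  -- key real inequalities
  have hkey1 : b ^ (2*r/s) ≤ a := by
    have h := Real.rpow_le_rpow hb0 hba (by positivity : (0:ℝ) ≤ 2*r/s)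
    rwa [← Real.rpow_mul ha0,
      (by field_simp : s/(2*r) * (2*r/s) = 1), Real.rpow_one] at h
  have hsq : ∀ α : ℝ, b ^ (2*α) = c ^ α * (1-V) ^ α := by
    intro α
    rw [Real.rpow_mul hb0 2 α, Real.rpow_two, hb2,
      Real.mul_rpow hc0.le (by linarith : (0:ℝ) ≤ 1 - V)]
  have hb2rs : b ^ (2*r/s) = c ^ (r/s) * (1-V) ^ (r/s) := by
    rw [show (2*r/s : ℝ) = 2 * (r/s) by ring, hsq]
  have hbexp : b ^ (2*(s-r)/s) = c ^ ((s-r)/s) * (1-V) ^ ((s-r)/s) := by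
    rw [show (2*(s-r)/s : ℝ) = 2 * ((s-r)/s) by ring, hsq]
  have hw1 : (0:ℝ) ≤ (s-r)/s := div_nonneg (by linarith) hs0.le
  have hw2 : (0:ℝ) ≤ r/s := by positivity
  have hwsum : (s-r)/s + r/s = 1 := by field_simp; ring
  have hbern : (1-V) ^ ((s-r)/s) ≤ 1 - (s-r)/s * V := by
    have h := Real.geom_mean_le_arith_mean2_weighted hw1 hw2 (by linarith : (0:ℝ) ≤ 1-V)
      (zero_le_one) hwsum
    rw [Real.one_rpow, mul_one] at h
    have e : (s-r)/s*(1-V) + r/s = 1 - (s-r)/s*V := by linear_combination hwsum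
    linarith
  have h1mw : (0:ℝ) ≤ 1 - (s-r)/s * V := by
    have h1 : (s-r)/s * V ≤ (s-r)/s := mul_le_of_le_one_right hw1 hV1
    linarith
  have hkey2 : a ≤ c ^ (r/s) * (1 - (s-r)/s * V) := by
    calc a ≤ b ^ (2*(s-r)/s) * c ^ ((2*r-s)/s) := hab
      _ = c ^ ((s-r)/s) * (1-V) ^ ((s-r)/s) * c ^ ((2*r-s)/s) := by rw [hbexp]
      _ = c ^ ((s-r)/s) * c ^ ((2*r-s)/s) * (1-V) ^ ((s-r)/s) := by ring
      _ = c ^ (r/s) * (1-V) ^ ((s-r)/s) := by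
          rw [← Real.rpow_add hc0, show (s-r)/s + (2*r-s)/s = r/s by ring]
      _ ≤ c ^ (r/s) * (1 - (s-r)/s * V) := by
          exact mul_le_mul_of_nonneg_left hbern (Real.rpow_nonneg hc0.le _)
  -- finish
  have hNr : (eLpNorm f (ENNReal.ofReal r) μ).toReal = a ^ (1/r) := by
    rw [her, ← ENNReal.toReal_rpow]
  have hNs : (eLpNorm f (ENNReal.ofReal s) μ).toReal = c ^ (1/s) := by
    rw [hes, ← ENNReal.toReal_rpow]
  have hexp_rs : r/s * (1/r) = 1/s := by field_simp
  constructor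
  · rcases le_or_gt (1 - 2*r/s*V) 0 with hneg | hpos
    · rw [max_eq_left hneg, Real.zero_rpow (one_div_ne_zero hr.ne'), mul_zero, hNr]
      exact Real.rpow_nonneg ha0 _
    · rw [max_eq_right hpos.le]
      have h2rs : (1:ℝ) ≤ 2*r/s := by rw [le_div_iff₀ hs0]; linarith
      have hVle : V ≤ 2*r/s*V := le_mul_of_one_le_left hV0 h2rs
      have hbig : (1 : ℝ) - 2*r/s*V ≤ (1-V) ^ (r/s) := by
        have h1 : (1:ℝ) - 2*r/s*V ≤ 1 - V := by linarith
        have h2 : (1-V) ^ (1:ℝ) ≤ (1-V) ^ (r/s) := by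
          refine Real.rpow_le_rpow_of_exponent_ge (by linarith) (by linarith) ?_
          rw [div_le_one hs0]; linarith
        rw [Real.rpow_one] at h2
        linarith
      have hlow : c ^ (r/s) * (1 - 2*r/s*V) ≤ a := by
        calc c ^ (r/s) * (1 - 2*r/s*V) ≤ c ^ (r/s) * (1-V) ^ (r/s) :=
              mul_le_mul_of_nonneg_left hbig (Real.rpow_nonneg hc0.le _)
          _ = b ^ (2*r/s) := hb2rs.symm
          _ ≤ a := hkey1
      have h := Real.rpow_le_rpow (by positivity) hlow (by positivity : (0:ℝ) ≤ 1/r)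
      rw [Real.mul_rpow (Real.rpow_nonneg hc0.le _) (by linarith),
        ← Real.rpow_mul hc0.le, hexp_rs] at h
      rw [hNr, hNs]
      exact h
  · have h := Real.rpow_le_rpow ha0 hkey2 (by positivity : (0:ℝ) ≤ 1/r)
    rw [Real.mul_rpow (Real.rpow_nonneg hc0.le _) h1mw,
      ← Real.rpow_mul hc0.le, hexp_rs] at h
    rw [hNr, hNs]
    exact h
end

section
/- Let (X, μ) be a measure space, 0 < p₀ < p < p₁ < ∞, and t ∈ (0,1) defined by 1/p = (1-t)/p₀ + t/p₁. Suppose f ∈ L^{p₀} ∩ L^{p₁}, f not a.e. zero, and p₀/p₁ ≤ 1/t - 1. Then ‖f‖_p ≤ ‖f‖_{p₀}^{1-t}·‖f‖_{p₁}^{t}·[1 - (2tp₀/((1-t)p₁ + tp₀))·(1 - ∫|f|^{(p₀+p₁)/2} / ((∫|f|^{p₀})^{1/2}(∫|f|^{p₁})^{1/2}))]^{1/p}. -/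
set_option maxHeartbeats 1000000

open MeasureTheory
open scoped ENNReal NNReal

theorem stmt_12 {X : Type*} [MeasurableSpace X] (μ : Measure X)
    (p₀ p p₁ t : ℝ) (h0 : 0 < p₀) (h01 : p₀ < p) (h1 : p < p₁)
    (ht0 : 0 < t) (ht1 : t < 1)
    (hp : 1 / p = (1 - t) / p₀ + t / p₁)
    (f : X → ℝ)
    (hf0 : MemLp f (ENNReal.ofReal p₀) μ) (hf1 : MemLp f (ENNReal.ofReal p₁) μ)
    (hfne : ¬ f =ᵐ[μ] 0)
    (hratio : p₀ / p₁ ≤ 1 / t - 1) :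
    (eLpNorm f (ENNReal.ofReal p) μ).toReal ≤
      (eLpNorm f (ENNReal.ofReal p₀) μ).toReal ^ (1 - t) *
      (eLpNorm f (ENNReal.ofReal p₁) μ).toReal ^ t *
      (1 - (2 * t * p₀ / ((1 - t) * p₁ + t * p₀)) *
        (1 - (∫ x, |f x| ^ ((p₀ + p₁) / 2) ∂μ) /
              ((∫ x, |f x| ^ p₀ ∂μ) ^ (1 / 2 : ℝ) * (∫ x, |f x| ^ p₁ ∂μ) ^ (1 / 2 : ℝ)))) ^ (1 / p) := by
  have hp0 : 0 < p := h0.trans h01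
  have hp1 : 0 < p₁ := hp0.trans h1
  have hD : 0 < (1 - t) * p₁ + t * p₀ := by nlinarith
  set D := (1 - t) * p₁ + t * p₀ with hDdef
  have hpeq : p = p₀ * p₁ / D := by
    rw [hDdef, eq_div_iff hD.ne']; field_simp at hp; linarith
  set α : ℝ := 2 * t * p₀ / D with hαdef
  have hα0 : 0 < α := div_pos (by nlinarith) hD
  have hα1 : α ≤ 1 := by
    rw [hαdef, div_le_one hD, hDdef]
    have h := (div_le_iff₀ hp1).mp hratio
    have h2 := mul_le_mul_of_nonneg_left h ht0.le
    have h3 : t * (1/t) = 1 := mul_one_div_cancel ht0.ne'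
    nlinarith
  set m : ℝ := (p₀ + p₁) / 2 with hmdef
  have hm0 : 0 < m := by rw [hmdef]; linarith
  -- exponent identities
  have hsum : α * m + (1 - α) * p₀ = p := by
    rw [hαdef, hmdef, hpeq, hDdef]; field_simp [show t * p₀ - t * p₁ + p₁ ≠ 0 from ne_of_gt (by nlinarith)]; linear_combination -(mul_inv_cancel₀ (show t * p₀ - t * p₁ + p₁ ≠ 0 from ne_of_gt (by nlinarith)))
  have hθa : (1 - α/2) / p = (1 - t) / p₀ := by
    rw [hαdef, hpeq, hDdef, div_eq_div_iff (by positivity) h0.ne']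
    field_simp [show t * p₀ - t * p₁ + p₁ ≠ 0 from ne_of_gt (by nlinarith)]
    linear_combination -(mul_inv_cancel₀ (show t * p₀ - t * p₁ + p₁ ≠ 0 from ne_of_gt (by nlinarith)))
  have hθb : (α/2) / p = t / p₁ := by
    rw [hαdef, hpeq, hDdef, div_eq_div_iff (by positivity) hp1.ne']
    field_simp
  -- lintegral setup
  set g : X → ℝ≥0∞ := fun x => (‖f x‖₊ : ℝ≥0∞) with hgdef
  have hgm : AEMeasurable g μ := hf0.1.aemeasurable.nnnorm.coe_nnreal_ennreal
  have hfin : ∀ r : ℝ, 0 < r → MemLp f (ENNReal.ofReal r) μ → (∫⁻ x, g x ^ r ∂μ) ≠ ⊤ := by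
    intro r hr hfr
    have hh := hfr.2
    rw [eLpNorm_eq_lintegral_rpow_enorm_toReal (by simp [ENNReal.ofReal_eq_zero]; linarith)
      ENNReal.ofReal_ne_top, ENNReal.toReal_ofReal hr.le] at hh
    exact ((ENNReal.rpow_lt_top_iff_of_pos (by positivity : (0:ℝ) < 1/r)).mp hh).ne
  have hne0 : ∀ r : ℝ, 0 < r → (∫⁻ x, g x ^ r ∂μ) ≠ 0 := by
    intro r hr h
    apply hfne
    have h2 := ENNReal.ae_eq_zero_of_lintegral_rpow_eq_zero hr.le hgm h
    filter_upwards [h2] with x hx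
    simpa [hgdef, nnnorm_eq_zero] using hx
  set A := ∫⁻ x, g x ^ p₀ ∂μ with hA
  set B := ∫⁻ x, g x ^ p₁ ∂μ with hB
  set C := ∫⁻ x, g x ^ m ∂μ with hC
  set P := ∫⁻ x, g x ^ p ∂μ with hP
  have hAfin : A ≠ ⊤ := hfin p₀ h0 hf0
  have hBfin : B ≠ ⊤ := hfin p₁ hp1 hf1
  have hAne : A ≠ 0 := hne0 p₀ h0
  have hBne : B ≠ 0 := hne0 p₁ hp1
  have hCne : C ≠ 0 := hne0 m hm0
  -- Cauchy-Schwarz : C ≤ A^(1/2) * B^(1/2)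
  have hCS : C ≤ A ^ (1/2 : ℝ) * B ^ (1/2 : ℝ) := by
    have h22 : (2:ℝ).HolderConjugate 2 := Real.holderConjugate_iff.mpr ⟨one_lt_two, by norm_num⟩
    have hle := ENNReal.lintegral_mul_le_Lp_mul_Lq μ h22
      (hgm.pow aemeasurable_const : AEMeasurable (fun x => g x ^ (p₀/2)) μ)
      (hgm.pow aemeasurable_const : AEMeasurable (fun x => g x ^ (p₁/2)) μ)
    have e0 : C = ∫⁻ x, ((fun x => g x ^ (p₀/2)) * (fun x => g x ^ (p₁/2))) x ∂μ := by
      apply lintegral_congr; intro x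
      simp only [Pi.mul_apply]
      rw [← ENNReal.rpow_add_of_nonneg _ _ (by positivity) (by positivity)]
      congr 1; rw [hmdef]; ring
    have e1 : (∫⁻ x, (g x ^ (p₀/2)) ^ (2:ℝ) ∂μ) = A :=
      lintegral_congr fun x => by rw [← ENNReal.rpow_mul, show p₀/2*2 = p₀ by ring]
    have e2 : (∫⁻ x, (g x ^ (p₁/2)) ^ (2:ℝ) ∂μ) = B :=
      lintegral_congr fun x => by rw [← ENNReal.rpow_mul, show p₁/2*2 = p₁ by ring]
    rw [e0]
    calc (∫⁻ x, ((fun x => g x ^ (p₀/2)) * (fun x => g x ^ (p₁/2))) x ∂μ)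
        ≤ (∫⁻ x, (g x ^ (p₀/2)) ^ (2:ℝ) ∂μ) ^ (1/2:ℝ) * (∫⁻ x, (g x ^ (p₁/2)) ^ (2:ℝ) ∂μ) ^ (1/2:ℝ) := hle
      _ = A ^ (1/2 : ℝ) * B ^ (1/2 : ℝ) := by rw [e1, e2]
  have hCfin : C ≠ ⊤ := by
    intro h
    rw [h, top_le_iff] at hCS
    exact absurd hCS (ENNReal.mul_ne_top
      (ENNReal.rpow_lt_top_of_nonneg (by norm_num) hAfin).ne
      (ENNReal.rpow_lt_top_of_nonneg (by norm_num) hBfin).ne)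
  -- main Hölder: P ≤ C^α * A^(1-α)
  have hmain : P ≤ C ^ α * A ^ (1 - α) := by
    rcases eq_or_lt_of_le hα1 with hEq | hlt
    · have hpm : p = m := by
        rw [hαdef] at hEq
        have h2 : t * p₀ = (1 - t) * p₁ := by
          have := (div_eq_one_iff_eq hD.ne').mp hEq
          rw [hDdef] at this; linarith
        rw [hmdef, hpeq, hDdef]
        rw [div_eq_div_iff hD.ne' (by norm_num : (2:ℝ) ≠ 0)]
        linear_combination (p₁ - p₀) * h2
      rw [hEq, ENNReal.rpow_one, sub_self, ENNReal.rpow_zero, mul_one]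
      exact le_of_eq (lintegral_congr fun x => by rw [hpm])
    · have hconj : (1/α).HolderConjugate (1/(1-α)) := by
        rw [Real.holderConjugate_iff]; constructor
        · rw [lt_div_iff₀ hα0]; linarith
        · rw [one_div, one_div, inv_inv, inv_inv]; ring
      have hle := ENNReal.lintegral_mul_le_Lp_mul_Lq μ hconj
        (hgm.pow aemeasurable_const : AEMeasurable (fun x => g x ^ (α * m)) μ)
        (hgm.pow aemeasurable_const : AEMeasurable (fun x => g x ^ ((1-α) * p₀)) μ)
      have e0 : P = ∫⁻ x, ((fun x => g x ^ (α*m)) * (fun x => g x ^ ((1-α)*p₀))) x ∂μ := by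
        apply lintegral_congr; intro x
        simp only [Pi.mul_apply]
        rw [← ENNReal.rpow_add_of_nonneg _ _ (by positivity) (by nlinarith), hsum]
      have e1 : (∫⁻ x, (g x ^ (α*m)) ^ (1/α) ∂μ) = C :=
        lintegral_congr fun x => by
          rw [← ENNReal.rpow_mul, show α*m*(1/α) = m by field_simp [hα0.ne']]
      have e2 : (∫⁻ x, (g x ^ ((1-α)*p₀)) ^ (1/(1-α)) ∂μ) = A :=
        lintegral_congr fun x => by
          rw [← ENNReal.rpow_mul, show (1-α)*p₀*(1/(1-α)) = p₀ by
            field_simp [sub_ne_zero.mpr hlt.ne']]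
      rw [e0]
      calc (∫⁻ x, ((fun x => g x ^ (α*m)) * (fun x => g x ^ ((1-α)*p₀))) x ∂μ)
          ≤ (∫⁻ x, (g x ^ (α*m)) ^ (1/α) ∂μ) ^ (1/(1/α)) *
            (∫⁻ x, (g x ^ ((1-α)*p₀)) ^ (1/(1-α)) ∂μ) ^ (1/(1/(1-α))) := hle
        _ = C ^ α * A ^ (1 - α) := by rw [e1, e2, one_div_one_div, one_div_one_div]
  have hPfin : P ≠ ⊤ := by
    intro h
    rw [h, top_le_iff] at hmain
    exact absurd hmain (ENNReal.mul_ne_top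
      (ENNReal.rpow_lt_top_of_nonneg hα0.le hCfin).ne
      (ENNReal.rpow_lt_top_of_nonneg (by linarith) hAfin).ne)
  -- real versions
  set a := A.toReal with ha
  set b := B.toReal with hb
  set c := C.toReal with hc
  have ha0 : 0 < a := ENNReal.toReal_pos hAne hAfin
  have hb0 : 0 < b := ENNReal.toReal_pos hBne hBfin
  have hc0 : 0 < c := ENNReal.toReal_pos hCne hCfin
  have hqle : P.toReal ≤ c ^ α * a ^ (1 - α) := by
    have h2 := ENNReal.toReal_mono (ENNReal.mul_ne_top
      (ENNReal.rpow_lt_top_of_nonneg hα0.le hCfin).ne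
      (ENNReal.rpow_lt_top_of_nonneg (by linarith) hAfin).ne) hmain
    rwa [ENNReal.toReal_mul, ← ENNReal.toReal_rpow, ← ENNReal.toReal_rpow] at h2
  have hcs : c ≤ a ^ (1/2:ℝ) * b ^ (1/2:ℝ) := by
    have h2 := ENNReal.toReal_mono (ENNReal.mul_ne_top
      (ENNReal.rpow_lt_top_of_nonneg (by norm_num) hAfin).ne
      (ENNReal.rpow_lt_top_of_nonneg (by norm_num) hBfin).ne) hCS
    rwa [ENNReal.toReal_mul, ← ENNReal.toReal_rpow, ← ENNReal.toReal_rpow] at h2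
  set S : ℝ := c / (a ^ (1/2:ℝ) * b ^ (1/2:ℝ)) with hSdef
  have hS0 : 0 < S := div_pos hc0 (by positivity)
  have hS1 : S ≤ 1 := (div_le_one (by positivity)).mpr hcs
  set Br : ℝ := 1 - α * (1 - S) with hBrdef
  have hBrS : S ≤ Br := by
    rw [hBrdef]
    have h' : α * (1-S) ≤ 1 * (1-S) := mul_le_mul_of_nonneg_right hα1 (by linarith)
    linarith
  have hBr0 : 0 < Br := lt_of_lt_of_le hS0 hBrS
  have hBern : S ^ α ≤ Br := by
    rw [show S = 1 + (S - 1) by ring]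
    calc (1 + (S-1)) ^ α ≤ 1 + α * (S - 1) :=
          rpow_one_add_le_one_add_mul_self (by linarith) hα0.le hα1
      _ = Br := by rw [hBrdef]; ring
  have hceq : c = (a ^ (1/2:ℝ) * b ^ (1/2:ℝ)) * S := by
    rw [hSdef]; field_simp
  have hab : (a ^ (1/2:ℝ) * b ^ (1/2:ℝ)) ^ α = a ^ (α/2) * b ^ (α/2) := by
    rw [Real.mul_rpow (by positivity) (by positivity), ← Real.rpow_mul ha0.le,
      ← Real.rpow_mul hb0.le, show 1/2*α = α/2 by ring]
  -- key real inequality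
  have hkey : P.toReal ≤ a ^ (1 - α/2) * b ^ (α/2) * Br := by
    calc P.toReal ≤ c ^ α * a ^ (1 - α) := hqle
      _ = a ^ (α/2) * b ^ (α/2) * S ^ α * a ^ (1 - α) := by
            rw [hceq, Real.mul_rpow (by positivity) hS0.le, hab]
      _ = a ^ (α/2) * a ^ (1 - α) * b ^ (α/2) * S ^ α := by ring
      _ = a ^ (1 - α/2) * b ^ (α/2) * S ^ α := by
            rw [← Real.rpow_add ha0, show α/2 + (1-α) = 1 - α/2 by ring]
      _ ≤ a ^ (1 - α/2) * b ^ (α/2) * Br :=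
            mul_le_mul_of_nonneg_left hBern (by positivity)
  -- convert the goal
  have hI : ∀ r : ℝ, 0 < r → ∫ x, |f x| ^ r ∂μ = (∫⁻ x, g x ^ r ∂μ).toReal := by
    intro r hr
    have hmeas : AEStronglyMeasurable (fun x => |f x| ^ r) μ :=
      ((continuous_abs.measurable.comp_aemeasurable hf0.1.aemeasurable).pow
        (aemeasurable_const (b := r))).aestronglyMeasurable
    rw [integral_eq_lintegral_of_nonneg_ae
      (Filter.Eventually.of_forall (fun x => by positivity : ∀ x, 0 ≤ |f x| ^ r)) hmeas]
    congr 1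
    apply lintegral_congr; intro x
    show ENNReal.ofReal (|f x| ^ r) = (‖f x‖₊ : ℝ≥0∞) ^ r
    rw [← ENNReal.ofReal_rpow_of_nonneg (abs_nonneg _) hr.le, ← Real.enorm_eq_ofReal_abs]; rfl
  have hE : ∀ r : ℝ, 0 < r →
      (eLpNorm f (ENNReal.ofReal r) μ).toReal = (∫⁻ x, g x ^ r ∂μ).toReal ^ (1/r) := by
    intro r hr
    rw [eLpNorm_eq_lintegral_rpow_enorm_toReal (by simp [ENNReal.ofReal_eq_zero]; linarith)
      ENNReal.ofReal_ne_top, ENNReal.toReal_ofReal hr.le, ← ENNReal.toReal_rpow]; rfl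
  rw [hE p hp0, hE p₀ h0, hE p₁ hp1, hI m hm0, hI p₀ h0, hI p₁ hp1]
  calc P.toReal ^ (1/p) ≤ (a ^ (1 - α/2) * b ^ (α/2) * Br) ^ (1/p) :=
        Real.rpow_le_rpow ENNReal.toReal_nonneg hkey (by positivity)
    _ = (a ^ (1 - α/2)) ^ (1/p) * (b ^ (α/2)) ^ (1/p) * Br ^ (1/p) := by
        rw [Real.mul_rpow (by positivity) hBr0.le, Real.mul_rpow (by positivity) (by positivity)]
    _ = (a ^ (1/p₀)) ^ (1 - t) * (b ^ (1/p₁)) ^ t * Br ^ (1/p) := by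
        rw [← Real.rpow_mul ha0.le, ← Real.rpow_mul hb0.le, ← Real.rpow_mul ha0.le,
          ← Real.rpow_mul hb0.le]
        congr 2
        · rw [show (1 - α/2) * (1/p) = (1 - α/2)/p by ring, hθa]; ring
        · rw [show (α/2) * (1/p) = (α/2)/p by ring, hθb]; ring
end

section
/- Let 1 < r < s < ∞ and let f, h be nonnegative functions in L^r with ‖f‖_r = ‖h‖_r = 1. Then ‖f^{r/s} - h^{r/s}‖_s ≤ ‖f - h‖_r^{r/s}. -/
open MeasureTheory
open scoped NNReal ENNReal

lemma aux_rpow_sub {a b θ : ℝ} (ha : 0 ≤ a) (hb : 0 ≤ b) (hθ0 : 0 ≤ θ) (hθ1 : θ ≤ 1)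
    (hba : b ≤ a) : a ^ θ - b ^ θ ≤ (a - b) ^ θ := by
  have key : a ^ θ ≤ (a - b) ^ θ + b ^ θ := by
    have := NNReal.rpow_add_le_add_rpow (a.toNNReal - b.toNNReal) b.toNNReal hθ0 hθ1
    have hab : (a.toNNReal - b.toNNReal) + b.toNNReal = a.toNNReal := by
      rw [tsub_add_cancel_of_le]
      exact Real.toNNReal_le_toNNReal hba
    rw [hab] at this
    have hco : ((a.toNNReal - b.toNNReal : ℝ≥0) : ℝ) = a - b := by
      simp [NNReal.coe_sub (Real.toNNReal_le_toNNReal hba),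
        Real.coe_toNNReal _ ha, Real.coe_toNNReal _ hb]
    calc a ^ θ = ((a.toNNReal : ℝ)) ^ θ := by rw [Real.coe_toNNReal _ ha]
      _ = ((a.toNNReal ^ θ : ℝ≥0) : ℝ) := by rw [NNReal.coe_rpow]
      _ ≤ (((a.toNNReal - b.toNNReal) ^ θ + b.toNNReal ^ θ : ℝ≥0) : ℝ) := by
          exact_mod_cast this
      _ = (a - b) ^ θ + b ^ θ := by
          push_cast [hco, Real.coe_toNNReal _ hb]; ring
  linarith

lemma aux_abs_rpow_sub {a b θ : ℝ} (ha : 0 ≤ a) (hb : 0 ≤ b) (hθ0 : 0 ≤ θ) (hθ1 : θ ≤ 1) :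
    |a ^ θ - b ^ θ| ≤ |a - b| ^ θ := by
  rcases le_total b a with hba | hab
  · rw [abs_of_nonneg (by linarith : (0:ℝ) ≤ a - b),
      abs_of_nonneg (sub_nonneg.2 (Real.rpow_le_rpow hb hba hθ0))]
    exact aux_rpow_sub ha hb hθ0 hθ1 hba
  · rw [abs_of_nonpos (by linarith : a - b ≤ 0),
      abs_of_nonpos (sub_nonpos.2 (Real.rpow_le_rpow ha hab hθ0))]
    rw [neg_sub, neg_sub]
    exact aux_rpow_sub hb ha hθ0 hθ1 hab

theorem stmt_13 {X : Type*} [MeasurableSpace X] (μ : Measure X)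
    (r s : ℝ) (hr : 1 < r) (hrs : r < s)
    (f h : X → ℝ) (hfpos : ∀ x, 0 ≤ f x) (hhpos : ∀ x, 0 ≤ h x)
    (hf : MemLp f (ENNReal.ofReal r) μ) (hh : MemLp h (ENNReal.ofReal r) μ)
    (hf1 : (eLpNorm f (ENNReal.ofReal r) μ).toReal = 1)
    (hh1 : (eLpNorm h (ENNReal.ofReal r) μ).toReal = 1) :
    (eLpNorm (fun x => f x ^ (r / s) - h x ^ (r / s)) (ENNReal.ofReal s) μ).toReal ≤
      (eLpNorm (f - h) (ENNReal.ofReal r) μ).toReal ^ (r / s) := by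
  have hr0 : (0:ℝ) < r := by linarith
  have hs0 : (0:ℝ) < s := by linarith
  have hθ0 : (0:ℝ) ≤ r / s := le_of_lt (div_pos hr0 hs0)
  have hθ1 : r / s ≤ 1 := by
    rw [div_le_one hs0]; linarith
  have hrtoR : (ENNReal.ofReal r).toReal = r := ENNReal.toReal_ofReal hr0.le
  have hstoR : (ENNReal.ofReal s).toReal = s := ENNReal.toReal_ofReal hs0.le
  have hrne0 : ENNReal.ofReal r ≠ 0 := by simp [ENNReal.ofReal_eq_zero]; linarith
  have hsne0 : ENNReal.ofReal s ≠ 0 := by simp [ENNReal.ofReal_eq_zero]; linarith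
  -- main ENNReal inequality
  have key : eLpNorm (fun x => f x ^ (r / s) - h x ^ (r / s)) (ENNReal.ofReal s) μ ≤
      (eLpNorm (f - h) (ENNReal.ofReal r) μ) ^ (r / s) := by
    rw [eLpNorm_eq_lintegral_rpow_enorm_toReal hsne0 ENNReal.ofReal_ne_top,
        eLpNorm_eq_lintegral_rpow_enorm_toReal hrne0 ENNReal.ofReal_ne_top, hrtoR, hstoR]
    rw [← ENNReal.rpow_mul]
    have hexp : 1 / r * (r / s) = 1 / s := by field_simp
    rw [hexp]
    apply ENNReal.rpow_le_rpow _ (by positivity)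
    apply lintegral_mono fun x => ?_
    have habs : |f x ^ (r / s) - h x ^ (r / s)| ^ s ≤ |f x - h x| ^ r := by
      calc |f x ^ (r / s) - h x ^ (r / s)| ^ s
          ≤ (|f x - h x| ^ (r / s)) ^ s := by
            apply Real.rpow_le_rpow (abs_nonneg _) _ hs0.le
            exact aux_abs_rpow_sub (hfpos x) (hhpos x) hθ0 hθ1
        _ = |f x - h x| ^ r := by
            rw [← Real.rpow_mul (abs_nonneg _)]
            congr 1
            field_simp
    calc ‖f x ^ (r / s) - h x ^ (r / s)‖ₑ ^ s
        = ENNReal.ofReal (|f x ^ (r / s) - h x ^ (r / s)| ^ s) := by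
          rw [Real.enorm_eq_ofReal_abs, ENNReal.ofReal_rpow_of_nonneg (abs_nonneg _) hs0.le]
      _ ≤ ENNReal.ofReal (|f x - h x| ^ r) := ENNReal.ofReal_le_ofReal habs
      _ = ‖(f - h) x‖ₑ ^ r := by
          rw [← ENNReal.ofReal_rpow_of_nonneg (abs_nonneg _) hr0.le,
            ← Real.enorm_eq_ofReal_abs]
          rfl
  have hrhs_ne_top : eLpNorm (f - h) (ENNReal.ofReal r) μ ≠ ⊤ :=
    (hf.sub hh).eLpNorm_ne_top
  calc (eLpNorm (fun x => f x ^ (r / s) - h x ^ (r / s)) (ENNReal.ofReal s) μ).toReal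
      ≤ ((eLpNorm (f - h) (ENNReal.ofReal r) μ) ^ (r / s)).toReal := by
        apply ENNReal.toReal_mono _ key
        exact ENNReal.rpow_ne_top_of_nonneg hθ0 hrhs_ne_top
    _ = (eLpNorm (f - h) (ENNReal.ofReal r) μ).toReal ^ (r / s) := by
        rw [ENNReal.toReal_rpow]
end

section
/- Let 1 ≤ p < ∞, 0 < t < 1, and let f, h ∈ L^p be real-valued with ‖|f| - |h|‖_p^p < t·‖f - h‖_p^p. Then ‖f + h‖_p^p < (‖f‖_p + ‖h‖_p)^p - (1 - t)·‖f - h‖_p^p. -/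
open MeasureTheory

lemma abs_pair_aux (u v : ℝ) :
    (|u + v| = |u| + |v| ∧ |u - v| = abs (|u| - |v|)) ∨
    (|u + v| = abs (|u| - |v|) ∧ |u - v| = |u| + |v|) := by
  rcases le_total 0 u with hu | hu <;> rcases le_total 0 v with hv | hv
  · left
    rw [abs_of_nonneg hu, abs_of_nonneg hv]
    exact ⟨abs_of_nonneg (by linarith), rfl⟩
  · right
    rw [abs_of_nonneg hu, abs_of_nonpos hv]
    constructor
    · rw [show u - -v = u + v by ring]
    · rw [abs_of_nonneg (by linarith : (0:ℝ) ≤ u - v)]; ring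
  · right
    rw [abs_of_nonpos hu, abs_of_nonneg hv]
    constructor
    · rw [show -u - v = -(u + v) by ring, abs_neg]
    · rw [abs_of_nonpos (by linarith : u - v ≤ 0)]; ring
  · left
    rw [abs_of_nonpos hu, abs_of_nonpos hv]
    constructor
    · rw [show -u + -v = -(u + v) by ring]
      exact abs_of_nonpos (by linarith)
    · rw [show -u - -v = -(u - v) by ring, abs_neg]

lemma key_id (p u v : ℝ) :
    |u + v| ^ p + |u - v| ^ p = abs (|u| + |v|) ^ p + abs (|u| - |v|) ^ p := by
  rw [abs_of_nonneg (by positivity : (0:ℝ) ≤ |u| + |v|)]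
  rcases abs_pair_aux u v with ⟨h1, h2⟩ | ⟨h1, h2⟩
  · rw [h1, h2]
  · rw [h1, h2, add_comm]

theorem stmt_17 {X : Type*} [MeasurableSpace X] (μ : Measure X)
    (p t : ℝ) (hp : 1 ≤ p) (ht0 : 0 < t) (ht1 : t < 1)
    (f h : X → ℝ)
    (hf : MemLp f (ENNReal.ofReal p) μ) (hh : MemLp h (ENNReal.ofReal p) μ)
    (hsmall : (eLpNorm (fun x => |f x| - |h x|) (ENNReal.ofReal p) μ).toReal ^ p <
      t * (eLpNorm (f - h) (ENNReal.ofReal p) μ).toReal ^ p) :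
    (eLpNorm (f + h) (ENNReal.ofReal p) μ).toReal ^ p <
      ((eLpNorm f (ENNReal.ofReal p) μ).toReal + (eLpNorm h (ENNReal.ofReal p) μ).toReal) ^ p -
        (1 - t) * (eLpNorm (f - h) (ENNReal.ofReal p) μ).toReal ^ p := by
  have hp0 : 0 < p := lt_of_lt_of_le one_pos hp
  set q := ENNReal.ofReal p with hqdef
  have hq0 : q ≠ 0 := (ENNReal.ofReal_pos.mpr hp0).ne'
  have hqt : q ≠ ⊤ := ENNReal.ofReal_ne_top
  have hqr : q.toReal = p := ENNReal.toReal_ofReal hp0.le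
  have norm_eq : ∀ g : X → ℝ, MemLp g q μ →
      (eLpNorm g q μ).toReal ^ p = ∫ x, |g x| ^ p ∂μ := by
    intro g hg
    have hnn : 0 ≤ ∫ x, ‖g x‖ ^ q.toReal ∂μ :=
      integral_nonneg fun x => Real.rpow_nonneg (norm_nonneg _) _
    rw [hg.eLpNorm_eq_integral_rpow_norm hq0 hqt,
      ENNReal.toReal_ofReal (Real.rpow_nonneg hnn _), hqr,
      Real.rpow_inv_rpow (by rwa [hqr] at hnn) hp0.ne']
    simp [Real.norm_eq_abs]
  have int_rpow : ∀ g : X → ℝ, MemLp g q μ → Integrable (fun x => |g x| ^ p) μ := by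
    intro g hg
    have := hg.integrable_norm_rpow hq0 hqt
    rw [hqr] at this
    simpa [Real.norm_eq_abs] using this
  have hfa : MemLp (fun x => |f x|) q μ := hf.abs
  have hha : MemLp (fun x => |h x|) q μ := hh.abs
  have hfh : MemLp (f + h) q μ := hf.add hh
  have hsub : MemLp (f - h) q μ := hf.sub hh
  have haa : MemLp (fun x => |f x| + |h x|) q μ := hfa.add hha
  have has : MemLp (fun x => |f x| - |h x|) q μ := hfa.sub hha
  -- integral identity
  have hid : (eLpNorm (f + h) q μ).toReal ^ p + (eLpNorm (f - h) q μ).toReal ^ p =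
      (eLpNorm (fun x => |f x| + |h x|) q μ).toReal ^ p +
      (eLpNorm (fun x => |f x| - |h x|) q μ).toReal ^ p := by
    rw [norm_eq _ hfh, norm_eq _ hsub, norm_eq _ haa, norm_eq _ has,
      ← integral_add (int_rpow _ hfh) (int_rpow _ hsub),
      ← integral_add (int_rpow _ haa) (int_rpow _ has)]
    refine integral_congr_ae (Filter.Eventually.of_forall fun x => ?_)
    simpa [Pi.add_apply, Pi.sub_apply] using key_id p (f x) (h x)
  -- triangle inequality
  have htri : (eLpNorm (fun x => |f x| + |h x|) q μ).toReal ≤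
      (eLpNorm f q μ).toReal + (eLpNorm h q μ).toReal := by
    have h1 : eLpNorm (fun x => |f x| + |h x|) q μ ≤
        eLpNorm f q μ + eLpNorm h q μ := by
      calc eLpNorm (fun x => |f x| + |h x|) q μ
          ≤ eLpNorm (fun x => |f x|) q μ + eLpNorm (fun x => |h x|) q μ :=
            eLpNorm_add_le hfa.aestronglyMeasurable hha.aestronglyMeasurable
              (ENNReal.one_le_ofReal.mpr hp)
        _ = eLpNorm f q μ + eLpNorm h q μ := by
            simp_rw [← Real.norm_eq_abs, eLpNorm_norm]
    calc (eLpNorm (fun x => |f x| + |h x|) q μ).toReal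
        ≤ (eLpNorm f q μ + eLpNorm h q μ).toReal :=
          ENNReal.toReal_mono (ENNReal.add_ne_top.mpr ⟨hf.eLpNorm_ne_top, hh.eLpNorm_ne_top⟩) h1
      _ = (eLpNorm f q μ).toReal + (eLpNorm h q μ).toReal :=
          ENNReal.toReal_add hf.eLpNorm_ne_top hh.eLpNorm_ne_top
  have htri2 : (eLpNorm (fun x => |f x| + |h x|) q μ).toReal ^ p ≤
      ((eLpNorm f q μ).toReal + (eLpNorm h q μ).toReal) ^ p :=
    Real.rpow_le_rpow ENNReal.toReal_nonneg htri hp0.le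
  have expand : (1 - t) * (eLpNorm (f - h) q μ).toReal ^ p =
      (eLpNorm (f - h) q μ).toReal ^ p - t * (eLpNorm (f - h) q μ).toReal ^ p := by ring
  linarith [hsmall, hid, htri2]
end

section
/- Let 2 ≤ p < ∞, 0 < t < 1, and let f, h ∈ L^p be complex-valued with ‖|f| - |h|‖_p^p < t·‖f - h‖_p^p. Then ‖f + h‖_p^p < (‖f‖_p + ‖h‖_p)^p - (1 - t)·‖f - h‖_p^p. -/
open MeasureTheory
open scoped ENNReal

lemma aux_convex {q s u v : ℝ} (hq : 1 ≤ q) (huv : |u| ≤ v) (hvs : v ≤ s) :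
    (s + u) ^ q + (s - u) ^ q ≤ (s + v) ^ q + (s - v) ^ q := by
  have hv0 : 0 ≤ v := (abs_nonneg u).trans huv
  rcases eq_or_lt_of_le hv0 with hv | hv
  · have hu : u = 0 := abs_eq_zero.mp (le_antisymm (huv.trans hv.ge) (abs_nonneg u))
    rw [hu, ← hv]
  · obtain ⟨hu1, hu2⟩ := abs_le.mp huv
    set θ := (v - u) / (2 * v) with hθdef
    have hθ0 : 0 ≤ θ := by
      apply div_nonneg <;> linarith
    have hθ1 : 0 ≤ 1 - θ := by
      rw [sub_nonneg, hθdef, div_le_one (by linarith)]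
      linarith
    have hsv0 : (0:ℝ) ≤ s - v := by linarith
    have hsv0' : (0:ℝ) ≤ s + v := by linarith
    have h2θ : 2 * θ * v = v - u := by
      rw [hθdef, mul_comm 2 ((v - u) / (2 * v)), mul_assoc, div_mul_cancel₀ _ (mul_pos two_pos hv).ne']
    have C := convexOn_rpow hq
    have c1 := C.2 (Set.mem_Ici.mpr hsv0) (Set.mem_Ici.mpr hsv0') hθ0 hθ1 (by ring)
    have c2 := C.2 (Set.mem_Ici.mpr hsv0) (Set.mem_Ici.mpr hsv0') hθ1 hθ0 (by ring)
    simp only [smul_eq_mul] at c1 c2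
    have e1 : θ * (s - v) + (1 - θ) * (s + v) = s + u := by nlinarith [h2θ]
    have e2 : (1 - θ) * (s - v) + θ * (s + v) = s - u := by nlinarith [h2θ]
    rw [e1] at c1
    rw [e2] at c2
    linarith

lemma aux_ptwise {p : ℝ} (hp : 2 ≤ p) (a b : ℂ) :
    ‖a + b‖ ^ p + ‖a - b‖ ^ p ≤
      (‖a‖ + ‖b‖) ^ p + |‖a‖ - ‖b‖| ^ p := by
  have hq : 1 ≤ p / 2 := by linarith
  have key : ∀ x : ℝ, 0 ≤ x → x ^ p = (x ^ 2) ^ (p / 2) := by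
    intro x hx
    rw [← Real.rpow_natCast x 2, ← Real.rpow_mul hx]
    norm_num
    congr 1
    ring
  set s := ‖a‖ ^ 2 + ‖b‖ ^ 2 with hs
  set u := 2 * (a * (starRingEnd ℂ) b).re with hu
  set v := 2 * (‖a‖ * ‖b‖) with hv
  have habs2 : ∀ z : ℂ, ‖z‖ ^ 2 = z.re ^ 2 + z.im ^ 2 := by
    intro z; rw [Complex.sq_norm, Complex.normSq_apply]; ring
  have h1 : ‖a + b‖ ^ 2 = s + u := by
    simp only [hs, hu, habs2, Complex.add_re, Complex.add_im, Complex.mul_re,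
      Complex.conj_re, Complex.conj_im]
    ring
  have h2 : ‖a - b‖ ^ 2 = s - u := by
    simp only [hs, hu, habs2, Complex.sub_re, Complex.sub_im, Complex.mul_re,
      Complex.conj_re, Complex.conj_im]
    ring
  have h3 : (‖a‖ + ‖b‖) ^ 2 = s + v := by rw [hs, hv]; ring
  have h4 : (‖a‖ - ‖b‖) ^ 2 = s - v := by rw [hs, hv]; ring
  have hvs : v ≤ s := by
    rw [hs, hv]; nlinarith [sq_nonneg (‖a‖ - ‖b‖)]
  have huv : |u| ≤ v := by
    rw [hu, hv, abs_mul, abs_two]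
    have := Complex.abs_re_le_norm (a * (starRingEnd ℂ) b)
    rw [norm_mul, Complex.norm_conj] at this
    linarith
  calc ‖a + b‖ ^ p + ‖a - b‖ ^ p
      = (s + u) ^ (p / 2) + (s - u) ^ (p / 2) := by
        rw [key _ (norm_nonneg _), key _ (norm_nonneg _), h1, h2]
    _ ≤ (s + v) ^ (p / 2) + (s - v) ^ (p / 2) := aux_convex hq huv hvs
    _ = (‖a‖ + ‖b‖) ^ p + |‖a‖ - ‖b‖| ^ p := by
        rw [key _ (by positivity), key _ (abs_nonneg _), h3, sq_abs, h4]

lemma aux_norm_rpow {X : Type*} [MeasurableSpace X] {μ : Measure X} {E : Type*}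
    [NormedAddCommGroup E] {p : ℝ} (hp : 0 < p) {g : X → E}
    (hg : MemLp g (ENNReal.ofReal p) μ) :
    (eLpNorm g (ENNReal.ofReal p) μ).toReal ^ p = ∫ x, ‖g x‖ ^ p ∂μ := by
  have hI : 0 ≤ ∫ x, ‖g x‖ ^ p ∂μ :=
    integral_nonneg fun x => Real.rpow_nonneg (norm_nonneg _) _
  rw [hg.eLpNorm_eq_integral_rpow_norm (by simp [ENNReal.ofReal_eq_zero]; linarith)
    ENNReal.ofReal_ne_top]
  rw [ENNReal.toReal_ofReal (Real.rpow_nonneg (integral_nonneg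
    fun x => Real.rpow_nonneg (norm_nonneg _) _) _)]
  simp only [ENNReal.toReal_ofReal hp.le]
  rw [← Real.rpow_mul hI, inv_mul_cancel₀ hp.ne', Real.rpow_one]

theorem stmt_18 {X : Type*} [MeasurableSpace X] (μ : Measure X)
    (p t : ℝ) (hp : 2 ≤ p) (ht0 : 0 < t) (ht1 : t < 1)
    (f h : X → ℂ)
    (hf : MemLp f (ENNReal.ofReal p) μ) (hh : MemLp h (ENNReal.ofReal p) μ)
    (hsmall : (eLpNorm (fun x => ‖f x‖ - ‖h x‖) (ENNReal.ofReal p) μ).toReal ^ p <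
      t * (eLpNorm (f - h) (ENNReal.ofReal p) μ).toReal ^ p) :
    (eLpNorm (f + h) (ENNReal.ofReal p) μ).toReal ^ p <
      ((eLpNorm f (ENNReal.ofReal p) μ).toReal + (eLpNorm h (ENNReal.ofReal p) μ).toReal) ^ p -
        (1 - t) * (eLpNorm (f - h) (ENNReal.ofReal p) μ).toReal ^ p := by
  have hp0 : 0 < p := by linarith
  have hq0 : ENNReal.ofReal p ≠ 0 := by simp [ENNReal.ofReal_eq_zero]; linarith
  have hqt : ENNReal.ofReal p ≠ ∞ := ENNReal.ofReal_ne_top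
  have hq1 : (1 : ℝ≥0∞) ≤ ENNReal.ofReal p := ENNReal.one_le_ofReal.mpr (by linarith)
  have hF : MemLp (fun x => ‖f x‖) (ENNReal.ofReal p) μ := by
    simpa using hf.norm
  have hH : MemLp (fun x => ‖h x‖) (ENNReal.ofReal p) μ := by
    simpa using hh.norm
  have hA : MemLp (fun x => ‖f x‖ + ‖h x‖) (ENNReal.ofReal p) μ :=
    hF.add hH
  have hD : MemLp (fun x => ‖f x‖ - ‖h x‖) (ENNReal.ofReal p) μ :=
    hF.sub hH
  have hadd : MemLp (f + h) (ENNReal.ofReal p) μ := hf.add hh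
  have hsub : MemLp (f - h) (ENNReal.ofReal p) μ := hf.sub hh
  -- integrability of rpow of norms
  have i1 : Integrable (fun x => ‖(f + h) x‖ ^ p) μ := by
    simpa [ENNReal.toReal_ofReal hp0.le] using hadd.integrable_norm_rpow hq0 hqt
  have i2 : Integrable (fun x => ‖(f - h) x‖ ^ p) μ := by
    simpa [ENNReal.toReal_ofReal hp0.le] using hsub.integrable_norm_rpow hq0 hqt
  have i3 : Integrable (fun x => ‖‖f x‖ + ‖h x‖‖ ^ p) μ := by
    simpa [ENNReal.toReal_ofReal hp0.le] using hA.integrable_norm_rpow hq0 hqt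
  have i4 : Integrable (fun x => ‖‖f x‖ - ‖h x‖‖ ^ p) μ := by
    simpa [ENNReal.toReal_ofReal hp0.le] using hD.integrable_norm_rpow hq0 hqt
  -- pointwise inequality integrated
  have pt : (∫ x, ‖(f + h) x‖ ^ p ∂μ) + (∫ x, ‖(f - h) x‖ ^ p ∂μ) ≤
      (∫ x, ‖‖f x‖ + ‖h x‖‖ ^ p ∂μ) +
        (∫ x, ‖‖f x‖ - ‖h x‖‖ ^ p ∂μ) := by
    rw [← integral_add i1 i2, ← integral_add i3 i4]
    refine integral_mono (i1.add i2) (i3.add i4) fun x => ?_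
    simp only [Pi.add_apply, Pi.sub_apply, Real.norm_eq_abs]
    have hnn : 0 ≤ ‖f x‖ + ‖h x‖ := by positivity
    rw [abs_of_nonneg hnn]
    exact aux_ptwise hp (f x) (h x)
  -- Minkowski
  have mink : (eLpNorm (fun x => ‖f x‖ + ‖h x‖) (ENNReal.ofReal p) μ).toReal
      ≤ (eLpNorm f (ENNReal.ofReal p) μ).toReal + (eLpNorm h (ENNReal.ofReal p) μ).toReal := by
    have tri : eLpNorm (fun x => ‖f x‖ + ‖h x‖) (ENNReal.ofReal p) μ ≤
        eLpNorm f (ENNReal.ofReal p) μ + eLpNorm h (ENNReal.ofReal p) μ := by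
      have := eLpNorm_add_le hF.1 hH.1 hq1
      calc eLpNorm (fun x => ‖f x‖ + ‖h x‖) (ENNReal.ofReal p) μ
          ≤ eLpNorm (fun x => ‖f x‖) (ENNReal.ofReal p) μ +
              eLpNorm (fun x => ‖h x‖) (ENNReal.ofReal p) μ := this
        _ = eLpNorm f (ENNReal.ofReal p) μ + eLpNorm h (ENNReal.ofReal p) μ := by
            congr 1 <;> (exact eLpNorm_norm _)
    calc (eLpNorm (fun x => ‖f x‖ + ‖h x‖) (ENNReal.ofReal p) μ).toReal
        ≤ (eLpNorm f (ENNReal.ofReal p) μ + eLpNorm h (ENNReal.ofReal p) μ).toReal :=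
          ENNReal.toReal_mono (by simp [hf.2.ne, hh.2.ne, ENNReal.add_ne_top]) tri
      _ = _ := ENNReal.toReal_add hf.2.ne hh.2.ne
  have minkp : (∫ x, ‖‖f x‖ + ‖h x‖‖ ^ p ∂μ) ≤
      ((eLpNorm f (ENNReal.ofReal p) μ).toReal + (eLpNorm h (ENNReal.ofReal p) μ).toReal) ^ p := by
    rw [← aux_norm_rpow hp0 hA]
    exact Real.rpow_le_rpow ENNReal.toReal_nonneg mink hp0.le
  have e1 := aux_norm_rpow hp0 hadd
  have e2 := aux_norm_rpow hp0 hsub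
  have e3 := aux_norm_rpow hp0 hD
  rw [e1, e2]
  rw [e2, e3] at hsmall
  have hDabs : (∫ x, ‖‖f x‖ - ‖h x‖‖ ^ p ∂μ) =
      ∫ x, ‖‖f x‖ - ‖h x‖‖ ^ p ∂μ := rfl
  linarith [pt, minkp, hsmall]
end

section
/- For complex numbers a, b with a real and a ≥ 0, and p ≥ 2, one has |a + b|^p + |a - b|^p ≤ (a + |b|)^p + |a - |b||^p. -/
lemma aux_convex_sum (q s t u : ℝ) (hq : 1 ≤ q) (htu : |t| ≤ u) (hus : u ≤ s) :
    (s + t) ^ q + (s - t) ^ q ≤ (s + u) ^ q + (s - u) ^ q := by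
  have hu0 : 0 ≤ u := le_trans (abs_nonneg t) htu
  rcases eq_or_lt_of_le hu0 with h | hupos
  · have ht : t = 0 := abs_eq_zero.mp (le_antisymm (h ▸ htu) (abs_nonneg t))
    simp [ht, ← h]
  · have hconv := convexOn_rpow hq
    set lam : ℝ := (u + t) / (2 * u) with hlam
    have hts : -u ≤ t ∧ t ≤ u := abs_le.mp htu
    have hlam0 : 0 ≤ lam := by
      apply div_nonneg <;> nlinarith [hts.1]
    have hlam1 : 0 ≤ 1 - lam := by
      rw [hlam, sub_nonneg, div_le_one (by linarith)]
      linarith [hts.2]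
    have hsum : lam + (1 - lam) = 1 := by ring
    have hmem1 : s + u ∈ Set.Ici (0:ℝ) := by simp; linarith
    have hmem2 : s - u ∈ Set.Ici (0:ℝ) := by simp; linarith
    have h1 := hconv.2 hmem1 hmem2 hlam0 hlam1 hsum
    have h2 := hconv.2 hmem2 hmem1 hlam0 hlam1 (by ring)
    have e1 : lam • (s + u) + (1 - lam) • (s - u) = s + t := by
      simp only [hlam, smul_eq_mul]; field_simp; ring
    have e2 : lam • (s - u) + (1 - lam) • (s + u) = s - t := by
      simp only [hlam, smul_eq_mul]; field_simp; ring
    rw [e1] at h1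
    rw [e2] at h2
    simp only [smul_eq_mul] at h1 h2
    nlinarith [h1, h2]

lemma sq_rpow_half_mul (x p : ℝ) (hx : 0 ≤ x) : (x ^ 2) ^ (p / 2) = x ^ p := by
  rw [← Real.rpow_natCast x 2, ← Real.rpow_mul hx]
  ring_nf

theorem stmt_19 (a : ℝ) (ha : 0 ≤ a) (b : ℂ) (p : ℝ) (hp : 2 ≤ p) :
    ‖(a : ℂ) + b‖ ^ p + ‖(a : ℂ) - b‖ ^ p ≤
      (a + ‖b‖) ^ p + |a - ‖b‖| ^ p := by
  set r := ‖b‖ with hr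
  have hr0 : 0 ≤ r := norm_nonneg b
  have hrsq : r ^ 2 = Complex.normSq b := Complex.sq_norm b
  set s : ℝ := a ^ 2 + Complex.normSq b with hs
  set t : ℝ := 2 * a * b.re with ht
  set u : ℝ := 2 * a * r with hu
  have hns : 0 ≤ Complex.normSq b := Complex.normSq_nonneg b
  have key : ∀ z : ℂ, ‖z‖ ^ p = Complex.normSq z ^ (p / 2) := by
    intro z
    rw [Complex.norm_def, Real.sqrt_eq_rpow, ← Real.rpow_mul (Complex.normSq_nonneg z)]
    ring_nf
  have h1 : Complex.normSq ((a : ℂ) + b) = s + t := by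
    simp [Complex.normSq_apply, hs, ht]; ring
  have h2 : Complex.normSq ((a : ℂ) - b) = s - t := by
    simp [Complex.normSq_apply, hs, ht]; ring
  have h3 : (a + r) ^ p = (s + u) ^ (p / 2) := by
    rw [← sq_rpow_half_mul _ p (by linarith)]
    congr 1
    rw [hs, hu, ← hrsq]; ring
  have h4 : |a - r| ^ p = (s - u) ^ (p / 2) := by
    rw [← sq_rpow_half_mul _ p (abs_nonneg _), sq_abs]
    congr 1
    rw [hs, hu, ← hrsq]; ring
  rw [key, key, h1, h2, h3, h4]
  apply aux_convex_sum _ _ _ _ (by linarith)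
  · rw [ht, hu, abs_mul, abs_of_nonneg (by linarith : (0:ℝ) ≤ 2 * a)]
    exact mul_le_mul_of_nonneg_left (Complex.abs_re_le_norm b) (by linarith)
  · rw [hu, hs, ← hrsq]; nlinarith [sq_nonneg (a - r)]
end
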